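/- arXiv:1405.5599 — 6 statements merged into one kernel-verified Lean document; each statement's English description precedes it below -/
import Mathlib

section
/- Let k ∈ ℕ and let T_0, T_1, T_2, … be nonempty sets of finite ordered trees, each tree of rank at most k. Then the function f(n) = max{|t| : t ∈ T_n} grows exponentially (f ∈ 2^{Ω(n)}) if and only if the function f'(n) = max{|σ(t)| : t ∈ T_n} grows exponentially (f' ∈ 2^{Ω(n)}). -/
/-! ## Finite ordered trees -/

inductive OTree (α : Type) : Type where
  | node : α → List (OTree α) → OTree α

namespace OTree

/-- Number of nodes of a tree. -/
def size {α : Type} : OTree α → ℕ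
  | node _ ts => 1 + (ts.attach.map (fun x => size x.1)).sum
decreasing_by
  have := List.sizeOf_lt_of_mem x.2
  simp only [OTree.node.sizeOf_spec]
  omega

/-- Does some label in the tree satisfy `p`? -/
def anyLabel {α : Type} (p : α → Bool) : OTree α → Bool
  | node l ts => p l || ts.attach.any (fun x => anyLabel p x.1)
decreasing_by
  have := List.sizeOf_lt_of_mem x.2
  simp only [OTree.node.sizeOf_spec]
  omega

/-- Rank: maximum number of children of a node. -/
def rank {α : Type} : OTree α → ℕ
  | node _ ts => max ts.length ((ts.attach.map (fun x => rank x.1)).foldr max 0)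
decreasing_by
  have := List.sizeOf_lt_of_mem x.2
  simp only [OTree.node.sizeOf_spec]
  omega

/-- Root label. -/
def root {α : Type} : OTree α → α
  | node l _ => l

end OTree

/-! ## Prioritized NFA -/

/-- A prioritized NFA over alphabet `A` with state set `Q`.  `isQ2 q = true` means `q ∈ Q₂`
(the ε-states); `isQ2 q = false` means `q ∈ Q₁`.  `d1` is the (partial) deterministic
transition function on `Q₁`, `d2` the prioritized ε-transition function on `Q₂`
(the list order gives the priorities), `final` the set of final states. -/
structure PNFA (A Q : Type) where
  isQ2 : Q → Bool
  init : Q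
  d1 : Q → A → Option Q
  d2 : Q → List Q
  final : Q → Bool

/-- Labels of nodes of backtracking runs: states, `acc` and `rej`. -/
inductive BLab (Q : Type) : Type where
  | st : Q → BLab Q
  | acc : BLab Q
  | rej : BLab Q

/-- A backtracking run succeeds iff `acc` occurs in it. -/
def OTree.succeeds {Q : Type} (t : OTree (BLab Q)) : Bool :=
  t.anyLabel (fun l => match l with | BLab.acc => true | _ => false)

/-- Keep the children trees up to and including the first succeeding one
(all of them if none succeeds). -/
def firstSucc {Q : Type} : List (OTree (BLab Q)) → List (OTree (BLab Q))
  | [] => []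
  | t :: ts => if t.succeeds then [t] else t :: firstSucc ts

/-- Termination measure for ε-recursions. -/
def cMeasure {A Q : Type} [Fintype Q] (M : PNFA A Q) (C : Q → ℕ) : ℕ :=
  ∑ q : Q, ((M.d2 q).length - min (C q) (M.d2 q).length)

/-- The `(q,w,C)`-backtracking run of the pNFA `M`. -/
def btr {A Q : Type} [DecidableEq Q] [Fintype Q] (M : PNFA A Q) (q : Q) (w : List A)
    (C : Q → ℕ) : OTree (BLab Q) :=
  if M.final q = true ∧ w.isEmpty = true then .node (.st q) [.node .acc []]
  else if M.isQ2 q = true then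
    if hik : (M.d2 q).length < C q + 1 then .node (.st q) [.node .rej []]
    else
      .node (.st q) (firstSucc ((List.range' (C q + 1) ((M.d2 q).length - C q)).attach.map
        (fun x => btr M ((M.d2 q)[x.1 - 1]'(by
            have hx := x.2; rw [List.mem_range'_1] at hx; omega)) w
          (Function.update C q x.1))))
  else
    match w with
    | [] => .node (.st q) [.node .rej []]
    | a :: w' =>
      match M.d1 q a with
      | some q' => .node (.st q) [btr M q' w' (fun _ => 0)]
      | none => .node (.st q) [.node .rej []]
termination_by (w.length, cMeasure M C)
decreasing_by
  · apply Prod.Lex.right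
    have hx := x.2; rw [List.mem_range'_1] at hx
    apply Finset.sum_lt_sum
    · intro p _
      by_cases hp : p = q
      · subst hp; simp only [Function.update_self]; omega
      · simp only [Function.update_of_ne hp]; omega
    · exact ⟨q, Finset.mem_univ q, by simp only [Function.update_self]; omega⟩
  · apply Prod.Lex.left
    simp

/-- The backtracking run of `M` on `w`. -/
def btrW {A Q : Type} [DecidableEq Q] [Fintype Q] (M : PNFA A Q) (w : List A) :
    OTree (BLab Q) :=
  btr M M.init w (fun _ => 0)

/-! ## NFA with ε-transitions -/

/-- An NFA with ε-transitions (`none` plays the role of ε). -/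
structure ENFA (A Q : Type) where
  init : Q
  tr : Q → Option A → Set Q
  F : Set Q

namespace ENFA

inductive Steps {A Q : Type} (N : ENFA A Q) : Q → List A → Q → Prop
  | refl (q : Q) : Steps N q [] q
  | eps {p q r : Q} {w : List A} : q ∈ N.tr p none → Steps N q w r → Steps N p w r
  | sym {p q r : Q} {a : A} {w : List A} :
      q ∈ N.tr p (some a) → Steps N q w r → Steps N p (a :: w) r

/-- The language accepted by the ε-NFA. -/
def Lang {A Q : Type} (N : ENFA A Q) : Set (List A) :=
  {w | ∃ q, q ∈ N.F ∧ N.Steps N.init w q}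

end ENFA

/-- The NFA `Ā` corresponding to a pNFA (forget priorities). -/
def PNFA.toENFA {A Q : Type} (M : PNFA A Q) : ENFA A Q where
  init := M.init
  tr q o :=
    match o with
    | some a => if M.isQ2 q then ∅ else {q' | M.d1 q a = some q'}
    | none => if M.isQ2 q then {q' | q' ∈ M.d2 q} else ∅
  F := {q | M.final q = true}

/-! ## Growth conditions -/

/-- `f` grows exponentially, i.e. `f ∈ 2^{Ω(n)}`. -/
def ExpGrowth (f : ℕ → ℕ) : Prop :=
  ∃ c : ℝ, 1 < c ∧ ∃ N : ℕ, ∀ n ≥ N, c ^ n ≤ (f n : ℝ)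

/-- `f(n) = max {|btr_M(w)| : |w| ≤ n}` (the alphabet being finite, the set below is a
nonempty bounded set of naturals, so `sSup` is its maximum). -/
noncomputable def btrMax {A Q : Type} [Fintype A] [DecidableEq Q] [Fintype Q]
    (M : PNFA A Q) (n : ℕ) : ℕ :=
  sSup {m | ∃ w : List A, w.length ≤ n ∧ m = (btrW M w).size}

/-- Number of leaves of a tree. -/
def OTree.leaves {α : Type} : OTree α → ℕ
  | .node _ [] => 1
  | .node _ ts => (ts.attach.map (fun x => leaves x.1)).sum
decreasing_by
  have := List.sizeOf_lt_of_mem x.2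
  simp only [OTree.node.sizeOf_spec]
  omega

/-- Every node is a leaf or has at least two children. -/
def Branching {α : Type} : OTree α → Prop
  | .node _ ts => (ts.length = 0 ∨ 2 ≤ ts.length) ∧ ∀ x ∈ ts.attach, Branching x.1
decreasing_by
  have := List.sizeOf_lt_of_mem x.2
  simp only [OTree.node.sizeOf_spec]
  omega

/-- Specification of the pruning function σ: it keeps leaves, keeps unary nodes
(recursively pruned), and at nodes with `k ≥ 2` children keeps (the prunings of)
two largest children. -/
def SigmaSpec {α : Type} (σ : OTree α → OTree α) : Prop :=
  ∀ (a : α) (ts : List (OTree α)),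
    (ts = [] → σ (.node a ts) = .node a ts) ∧
    (∀ t, ts = [t] → σ (.node a ts) = .node a [σ t]) ∧
    (2 ≤ ts.length →
      ∃ i j : Fin ts.length, i ≠ j ∧
        (∀ l : Fin ts.length, l ≠ i → l ≠ j →
          (ts.get l).size ≤ (ts.get i).size ∧ (ts.get l).size ≤ (ts.get j).size) ∧
        σ (.node a ts) = .node a [σ (ts.get i), σ (ts.get j)])

namespace Aux0
open OTree

lemma size_node {α : Type} (a : α) (ts : List (OTree α)) :
    (OTree.node a ts).size = 1 + (ts.map OTree.size).sum := by
  rw [OTree.size, List.attach_map_val]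

lemma one_le_size {α : Type} (t : OTree α) : 1 ≤ t.size := by
  cases t with | node a ts => rw [size_node]; omega

lemma foldr_max_le {x : ℕ} {l : List ℕ} (h : x ∈ l) : x ≤ l.foldr max 0 := by
  induction l with
  | nil => simp at h
  | cons y l ih =>
    rcases List.mem_cons.1 h with h | h
    · subst h; exact le_max_left _ _
    · exact le_trans (ih h) (le_max_right _ _)

lemma length_le_rank {α : Type} (a : α) (ts : List (OTree α)) :
    ts.length ≤ (OTree.node a ts).rank := by
  rw [OTree.rank]; exact le_max_left _ _

lemma child_rank_le {α : Type} (a : α) (ts : List (OTree α)) {c : OTree α} (hc : c ∈ ts) :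
    c.rank ≤ (OTree.node a ts).rank := by
  rw [OTree.rank, List.attach_map_val]
  exact le_trans (foldr_max_le (List.mem_map_of_mem hc)) (le_max_right _ _)

lemma child_size_le {α : Type} {c : OTree α} {ts : List (OTree α)} (hc : c ∈ ts) :
    c.size ≤ (ts.map OTree.size).sum :=
  List.single_le_sum (by simp) _ (List.mem_map_of_mem hc)

lemma I1 {a m : ℕ} (ha : 1 ≤ a) (hm : 1 ≤ m) : 1 + a ^ m ≤ (1 + a) ^ m := by
  induction m with
  | zero => omega
  | succ m ih =>
    rcases Nat.eq_or_lt_of_le hm with h | h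
    · simp [← h]
    · have ih' := ih (by omega)
      calc 1 + a ^ (m + 1) = 1 + a * a ^ m := by ring
        _ ≤ (1 + a) * (1 + a ^ m) := by nlinarith [Nat.one_le_pow m a (by omega)]
        _ ≤ (1 + a) * (1 + a) ^ m := Nat.mul_le_mul_left _ ih'
        _ = (1 + a) ^ (m + 1) := by ring

lemma I2 {A B m : ℕ} (hB : 1 ≤ B) (hBA : B ≤ A) (hm : 1 ≤ m) :
    A ^ m + 2 ^ m * B ^ m ≤ (A + B) ^ m + B ^ m := by
  induction m with
  | zero => omega
  | succ m ih =>
    rcases Nat.eq_or_lt_of_le hm with h | h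
    · simp [← h]; omega
    · have hm1 : 1 ≤ m := by omega
      have ih' := ih hm1
      have hpm : B ^ m ≤ A ^ m := Nat.pow_le_pow_left hBA m
      have h1 : (A + B) * (A ^ m + 2 ^ m * B ^ m) ≤ (A + B) * ((A + B) ^ m + B ^ m) :=
        Nat.mul_le_mul_left _ ih'
      have h2 : 1 ≤ 2 ^ m := Nat.one_le_two_pow
      have t1 : B * B ^ m ≤ B * A ^ m := Nat.mul_le_mul_left _ hpm
      have t3 : B * B ^ m ≤ A * B ^ m := Nat.mul_le_mul_right _ hBA
      have t4 : A * B ^ m ≤ B * A ^ m := by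
        obtain ⟨m', rfl⟩ : ∃ m', m = m' + 1 := ⟨m - 1, by omega⟩
        have hh := Nat.pow_le_pow_left hBA m'
        calc A * B ^ (m' + 1) = (A * B) * B ^ m' := by ring
          _ ≤ (A * B) * A ^ m' := Nat.mul_le_mul_left _ hh
          _ = B * A ^ (m' + 1) := by ring
      simp only [pow_succ]
      nlinarith [h1, t1, t3, t4, h2, Nat.mul_le_mul t3 h2]

lemma core {m A B c : ℕ} (hm : 1 ≤ m) (hB : 1 ≤ B) (hBA : B ≤ A) (hk : c + 2 ≤ 2 ^ m) :
    1 + A ^ m + B ^ m + c * B ^ m ≤ (1 + A + B) ^ m := by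
  have h2 := I2 hB hBA hm
  have hA : 1 ≤ A + B := by omega
  have hc : (c + 1) * B ^ m + B ^ m ≤ 2 ^ m * B ^ m := by
    calc (c + 1) * B ^ m + B ^ m = (c + 2) * B ^ m := by ring
      _ ≤ 2 ^ m * B ^ m := Nat.mul_le_mul_right _ hk
  calc 1 + A ^ m + B ^ m + c * B ^ m = 1 + (A ^ m + (c + 1) * B ^ m) := by ring
    _ ≤ 1 + (A + B) ^ m := by omega
    _ ≤ (1 + (A + B)) ^ m := I1 hA hm
    _ = (1 + A + B) ^ m := by ring_nf

lemma sum_bound {L : ℕ} (g : Fin L → ℕ) (i j : Fin L) (hij : i ≠ j) {M : ℕ}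
    (hM : ∀ l, l ≠ i → l ≠ j → g l ≤ M) :
    ∑ l, g l ≤ g i + g j + (L - 2) * M := by
  have hsub : ({i, j} : Finset (Fin L)) ⊆ Finset.univ := Finset.subset_univ _
  have hsplit : ∑ l ∈ (Finset.univ \ ({i, j} : Finset (Fin L))), g l
      + ∑ l ∈ ({i, j} : Finset (Fin L)), g l = ∑ l, g l := Finset.sum_sdiff hsub
  rw [Finset.sum_pair hij] at hsplit
  have hcard : (Finset.univ \ ({i, j} : Finset (Fin L))).card = L - 2 := by
    rw [Finset.card_sdiff_of_subset hsub, Finset.card_univ, Finset.card_pair hij, Fintype.card_fin]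
  have hrest : ∑ l ∈ (Finset.univ \ {i, j}), g l ≤ (L - 2) * M := by
    calc ∑ l ∈ (Finset.univ \ {i, j}), g l
        ≤ ∑ _l ∈ (Finset.univ \ ({i, j} : Finset (Fin L))), M := by
          apply Finset.sum_le_sum
          intro l hl
          simp only [Finset.mem_sdiff, Finset.mem_insert, Finset.mem_singleton] at hl
          exact hM l (fun h => hl.2 (Or.inl h)) (fun h => hl.2 (Or.inr h))
      _ = (L - 2) * M := by rw [Finset.sum_const, hcard, smul_eq_mul]
  omega

lemma sum_fin {α : Type} (ts : List α) (f : α → ℕ) :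
    ∑ i : Fin ts.length, f (ts.get i) = (ts.map f).sum := by
  rw [← List.sum_ofFn]; congr 1; apply List.ext_get <;> simp

lemma sigma_size_le {α : Type} {σ : OTree α → OTree α} (hσ : SigmaSpec σ) (t : OTree α) :
    (σ t).size ≤ t.size := by
  suffices H : ∀ n (t : OTree α), t.size ≤ n → (σ t).size ≤ t.size from H t.size t le_rfl
  intro n
  induction n with
  | zero => intro t h; have := one_le_size t; omega
  | succ n ih =>
    intro t h
    cases t with
    | node a ts =>
      obtain ⟨h0, h1, h2⟩ := hσ a ts
      rcases ts with _ | ⟨t1, _ | ⟨t2, ts''⟩⟩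
      · rw [h0 rfl]
      · rw [h1 t1 rfl, size_node, size_node]
        have hs : t1.size ≤ n := by
          rw [size_node] at h; simp at h; omega
        have := ih t1 hs
        simp only [List.map_cons, List.map_nil, List.sum_cons, List.sum_nil]
        omega
      · set L := t1 :: t2 :: ts'' with hL
        have hlen : 2 ≤ L.length := by rw [hL]; simp
        obtain ⟨i, j, hij, hmax, heq⟩ := h2 hlen
        rw [heq]
        have hsz : (OTree.node a [σ (L.get i), σ (L.get j)]).size
            = 1 + (σ (L.get i)).size + (σ (L.get j)).size := by
          rw [size_node]; simp; omega
        rw [hsz, size_node]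
        have hsum : (L.map OTree.size).sum ≤ n := by
          rw [size_node] at h; omega
        have hmi : L.get i ∈ L := L.get_mem i
        have hmj : L.get j ∈ L := L.get_mem j
        have hi : (L.get i).size ≤ n := le_trans (child_size_le hmi) hsum
        have hj : (L.get j).size ≤ n := le_trans (child_size_le hmj) hsum
        have ihi := ih _ hi
        have ihj := ih _ hj
        have hij2 : (L.get i).size + (L.get j).size ≤ (L.map OTree.size).sum := by
          have hsb := Finset.sum_le_sum_of_subset
            (Finset.subset_univ ({i, j} : Finset (Fin L.length)))
            (f := fun l => (L.get l).size)
          rw [Finset.sum_pair hij] at hsb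
          simpa [sum_fin] using hsb
        omega

lemma size_le_pow {α : Type} {σ : OTree α → OTree α} (hσ : SigmaSpec σ) (k : ℕ)
    (t : OTree α) (ht : t.rank ≤ k) : t.size ≤ (σ t).size ^ (k + 1) := by
  set m := k + 1 with hmdef
  have hm : 1 ≤ m := by omega
  have h2m : k ≤ 2 ^ m := by
    have := Nat.lt_two_pow_self (n := k)
    have h2 : (2 : ℕ) ^ k ≤ 2 ^ m := Nat.pow_le_pow_right (by omega) (by omega)
    omega
  suffices H : ∀ n (t : OTree α), t.size ≤ n → t.rank ≤ k → t.size ≤ (σ t).size ^ m from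
    H t.size t le_rfl ht
  intro n
  induction n with
  | zero => intro t h _; have := one_le_size t; omega
  | succ n ih =>
    intro t h hr
    cases t with
    | node a ts =>
      obtain ⟨h0, h1, h2⟩ := hσ a ts
      rcases ts with _ | ⟨t1, _ | ⟨t2, ts''⟩⟩
      · rw [h0 rfl, size_node]
        simpa using Nat.one_le_pow m 1 (by omega)
      · rw [h1 t1 rfl, size_node, size_node]
        have hs : t1.size ≤ n := by rw [size_node] at h; simp at h; omega
        have hrk1 : t1.rank ≤ k := le_trans (child_rank_le a _ (by simp)) hr
        have ih1 := ih t1 hs hrk1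
        simp only [List.map_cons, List.map_nil, List.sum_cons, List.sum_nil, Nat.add_zero]
        have hs1 : 1 ≤ (σ t1).size := one_le_size _
        calc 1 + t1.size ≤ 1 + (σ t1).size ^ m := by omega
          _ ≤ (1 + (σ t1).size) ^ m := I1 hs1 hm
      · set L := t1 :: t2 :: ts'' with hLdef
        have hlen : 2 ≤ L.length := by rw [hLdef]; simp
        have hLk : L.length ≤ k := le_trans (length_le_rank a L) hr
        obtain ⟨i, j, hij, hmax, heq⟩ := h2 hlen
        rw [heq]
        have hsum : (L.map OTree.size).sum ≤ n := by rw [size_node] at h; omega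
        have hmi : L.get i ∈ L := L.get_mem i
        have hmj : L.get j ∈ L := L.get_mem j
        have ihi := ih _ (le_trans (child_size_le hmi) hsum)
          (le_trans (child_rank_le a _ hmi) hr)
        have ihj := ih _ (le_trans (child_size_le hmj) hsum)
          (le_trans (child_rank_le a _ hmj) hr)
        set si := (σ (L.get i)).size with hsi
        set sj := (σ (L.get j)).size with hsj
        have hsi1 : 1 ≤ si := one_le_size _
        have hsj1 : 1 ≤ sj := one_le_size _
        set M := min (L.get i).size (L.get j).size with hM
        have hsb : ∑ l, (L.get l).size ≤ (L.get i).size + (L.get j).size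
            + (L.length - 2) * M := by
          apply sum_bound _ i j hij
          intro l hli hlj
          exact le_min (hmax l hli hlj).1 (hmax l hli hlj).2
        rw [sum_fin] at hsb
        have hsize : (OTree.node a L).size ≤ 1 + (L.get i).size + (L.get j).size
            + (L.length - 2) * M := by rw [size_node]; omega
        have hck : L.length - 2 + 2 ≤ 2 ^ m := by omega
        have hgoal : (OTree.node a L).size ≤ (1 + si + sj) ^ m := by
          rcases le_total si sj with hc | hc
          · have hMm : M ≤ si ^ m := le_trans (min_le_left _ _) ihi
            have hfin : 1 + sj ^ m + si ^ m + (L.length - 2) * si ^ m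
                ≤ (1 + sj + si) ^ m := core hm hsi1 hc hck
            have : (1 + sj + si) = (1 + si + sj) := by omega
            rw [this] at hfin
            have hMul : (L.length - 2) * M ≤ (L.length - 2) * si ^ m :=
              Nat.mul_le_mul_left _ hMm
            omega
          · have hMm : M ≤ sj ^ m := le_trans (min_le_right _ _) ihj
            have hfin : 1 + si ^ m + sj ^ m + (L.length - 2) * sj ^ m
                ≤ (1 + si + sj) ^ m := core hm hsj1 hc hck
            have hMul : (L.length - 2) * M ≤ (L.length - 2) * sj ^ m :=
              Nat.mul_le_mul_left _ hMm
            omega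
        have hsz : (OTree.node a [σ (L.get i), σ (L.get j)]).size = 1 + si + sj := by
          rw [size_node]; simp [hsi, hsj]; omega
        rw [hsz]
        exact hgoal

end Aux0

/-- For nonempty families `T n` of trees of rank at most `k`,
`f(n) = max{|t| : t ∈ T n}` grows exponentially iff
`f'(n) = max{|σ(t)| : t ∈ T n}` grows exponentially. -/
theorem statement0 {α : Type} (k : ℕ) (T : ℕ → Set (OTree α))
    (hne : ∀ n, (T n).Nonempty)
    (hrk : ∀ n, ∀ t ∈ T n, t.rank ≤ k)
    (σ : OTree α → OTree α) (hσ : SigmaSpec σ)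
    (f f' : ℕ → ℕ)
    (hf : ∀ n, IsGreatest (OTree.size '' T n) (f n))
    (hf' : ∀ n, IsGreatest ((fun t => (σ t).size) '' T n) (f' n)) :
    ExpGrowth f ↔ ExpGrowth f' := by
  have hle : ∀ n, f' n ≤ f n := by
    intro n
    obtain ⟨t, ht, hts⟩ := (hf' n).1
    calc f' n = (σ t).size := hts.symm
      _ ≤ t.size := Aux0.sigma_size_le hσ t
      _ ≤ f n := (hf n).2 ⟨t, ht, rfl⟩
  have hpow : ∀ n, f n ≤ (f' n) ^ (k + 1) := by
    intro n
    obtain ⟨t, ht, hts⟩ := (hf n).1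
    calc f n = t.size := hts.symm
      _ ≤ (σ t).size ^ (k + 1) := Aux0.size_le_pow hσ k t (hrk n t ht)
      _ ≤ (f' n) ^ (k + 1) := Nat.pow_le_pow_left ((hf' n).2 ⟨t, ht, rfl⟩) _
  constructor
  · rintro ⟨c, hc, N, hN⟩
    have hc0 : (0 : ℝ) < c := lt_trans one_pos hc
    set m : ℕ := k + 1 with hm
    have hm0 : m ≠ 0 := by omega
    have hmR : (m : ℝ) ≠ 0 := Nat.cast_ne_zero.mpr hm0
    have hminv : (0 : ℝ) < (m : ℝ)⁻¹ := by positivity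
    refine ⟨c ^ ((m : ℝ)⁻¹), ?_, N, ?_⟩
    · rw [Real.one_lt_rpow_iff_of_pos hc0]
      exact Or.inl ⟨hc, hminv⟩
    · intro n hn
      have hcn : ((c ^ ((m : ℝ)⁻¹)) ^ n) ^ m = c ^ n := by
        rw [← pow_mul, ← Real.rpow_natCast (c ^ ((m : ℝ)⁻¹)) (n * m),
          ← Real.rpow_mul hc0.le, ← Real.rpow_natCast c n]
        congr 1
        push_cast
        field_simp
      apply le_of_pow_le_pow_left₀ hm0 (by positivity)
      rw [hcn]
      calc (c : ℝ) ^ n ≤ (f n : ℝ) := hN n hn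
        _ ≤ ((f' n : ℝ)) ^ m := by exact_mod_cast hpow n
  · rintro ⟨c, hc, N, hN⟩
    refine ⟨c, hc, N, fun n hn => le_trans (hN n hn) ?_⟩
    exact_mod_cast hle n
end

section
/- For every integer k ≥ 2 and every finite ordered tree t of rank at most k in which every node is either a leaf or has at least two children, the number of leaves satisfies ℓ(σ(t)) ≥ ℓ(t)^{log_k 2}, where ℓ(s) denotes the number of leaves of a tree s. -/
/-! ## Auxiliary lemmas for statement 1 -/

section Stmt1Aux

open Real

private theorem my_submod (p y c d : ℝ) (h0 : 0 ≤ p) (h1 : p ≤ 1) (hy : 0 ≤ y) (hc : 0 ≤ c)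
    (hd : 0 ≤ d) : (y + c + d) ^ p + y ^ p ≤ (y + c) ^ p + (y + d) ^ p := by
  rcases eq_or_lt_of_le (by positivity : (0:ℝ) ≤ c + d) with h | h
  · have hc0 : c = 0 := by linarith
    have hd0 : d = 0 := by linarith
    simp [hc0, hd0]
  · have K := Real.concaveOn_rpow h0 h1
    set s := c + d with hs
    have h1' := K.2 (Set.mem_Ici.mpr hy) (Set.mem_Ici.mpr (by linarith : (0:ℝ) ≤ y + s))
      (by positivity : 0 ≤ d / s) (by positivity : 0 ≤ c / s) (by field_simp; linarith)
    have h2' := K.2 (Set.mem_Ici.mpr hy) (Set.mem_Ici.mpr (by linarith : (0:ℝ) ≤ y + s))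
      (by positivity : 0 ≤ c / s) (by positivity : 0 ≤ d / s) (by field_simp; linarith)
    simp only [smul_eq_mul] at h1' h2'
    have e1 : d / s * y + c / s * (y + s) = y + c := by field_simp; ring
    have e2 : c / s * y + d / s * (y + s) = y + d := by field_simp; ring
    rw [e1] at h1'
    rw [e2] at h2'
    have ht : d / s + c / s = 1 := by field_simp; ring
    have key : d / s * y ^ p + c / s * (y + s) ^ p + (c / s * y ^ p + d / s * (y + s) ^ p)
        = y ^ p + (y + s) ^ p := by
      linear_combination (y ^ p + (y + s) ^ p) * ht
    rw [show y + c + d = y + s by rw [hs]; ring]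
    linarith [h1', h2', key]

private theorem my_key_ineq (K : ℝ) (hK : 2 ≤ K) (X Y : ℝ) (hY : 0 < Y) (hXY : Y ≤ X) :
    (X + (K - 1) * Y) ^ (logb K 2) ≤ X ^ logb K 2 + Y ^ logb K 2 := by
  set p := logb K 2 with hp
  have hK1 : (1:ℝ) < K := by linarith
  have hp0 : 0 < p := Real.logb_pos hK1 one_lt_two
  have hp1 : p ≤ 1 := by
    rw [hp, Real.logb, div_le_one (Real.log_pos hK1)]
    exact Real.log_le_log (by norm_num) hK
  have h := my_submod p Y ((K - 1) * Y) (X - Y) hp0.le hp1 hY.le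
    (by nlinarith) (by linarith)
  have e1 : Y + (K - 1) * Y + (X - Y) = X + (K - 1) * Y := by ring
  have e2 : Y + (K - 1) * Y = K * Y := by ring
  have e3 : Y + (X - Y) = X := by ring
  rw [e1, e2, e3] at h
  have e4 : (K * Y) ^ p = 2 * Y ^ p := by
    rw [Real.mul_rpow (by linarith) hY.le, hp,
      Real.rpow_logb (by linarith) (by linarith) (by norm_num)]
  rw [e4] at h
  linarith

private theorem my_size_node {α : Type} (a : α) (ts : List (OTree α)) :
    (OTree.node a ts).size = 1 + (ts.map OTree.size).sum := by
  rw [OTree.size]; simp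

private theorem my_leaves_node {α : Type} (a : α) (t : OTree α) (ts : List (OTree α)) :
    (OTree.node a (t :: ts)).leaves = ((t :: ts).map OTree.leaves).sum := by
  rw [OTree.leaves]
  · simp
  · simp

private theorem my_leaves_nil {α : Type} (a : α) : (OTree.node a ([] : List (OTree α))).leaves = 1 := by
  rw [OTree.leaves]

private theorem my_size_pos {α : Type} (t : OTree α) : 1 ≤ t.size := by
  cases t with
  | node a ts => rw [my_size_node]; omega

private theorem my_size_child_le {α : Type} (a : α) (ts : List (OTree α)) {c : OTree α}
    (hc : c ∈ ts) : c.size ≤ (ts.map OTree.size).sum :=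
  List.single_le_sum (fun x _ => Nat.zero_le x) _ (List.mem_map_of_mem (f := OTree.size) hc)

private theorem my_foldr_max_le {l : List ℕ} {x : ℕ} (hx : x ∈ l) : x ≤ l.foldr max 0 := by
  induction l with
  | nil => simp at hx
  | cons h t ih =>
    rcases List.mem_cons.mp hx with rfl | hx
    · exact le_max_left _ _
    · exact le_trans (ih hx) (le_max_right _ _)

private theorem my_rank_node {α : Type} (a : α) (ts : List (OTree α)) :
    (OTree.node a ts).rank = max ts.length ((ts.map OTree.rank).foldr max 0) := by
  rw [OTree.rank]; simp

private theorem my_length_le_rank {α : Type} (a : α) (ts : List (OTree α)) :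
    ts.length ≤ (OTree.node a ts).rank := by
  rw [my_rank_node]; exact le_max_left _ _

private theorem my_rank_child_le {α : Type} (a : α) (ts : List (OTree α)) {c : OTree α}
    (hc : c ∈ ts) : c.rank ≤ (OTree.node a ts).rank := by
  rw [my_rank_node]
  exact le_trans (my_foldr_max_le (List.mem_map_of_mem (f := OTree.rank) hc)) (le_max_right _ _)

private theorem my_branching_node {α : Type} {a : α} {ts : List (OTree α)}
    (h : Branching (OTree.node a ts)) :
    (ts.length = 0 ∨ 2 ≤ ts.length) ∧ ∀ c ∈ ts, Branching c := by
  rw [Branching] at h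
  exact ⟨h.1, fun c hc => h.2 ⟨c, hc⟩ (List.mem_attach _ _)⟩

/-- For trees of rank at most `k`: `k·ℓ(t) + |t| ≤ k·|t| + 1`. -/
private theorem my_leaves_size {α : Type} (k : ℕ) : ∀ n (t : OTree α), t.size ≤ n →
    t.rank ≤ k → k * t.leaves + t.size ≤ k * t.size + 1 := by
  intro n
  induction n with
  | zero => intro t h; have := my_size_pos t; omega
  | succ n ih =>
    intro t hn hrk
    obtain ⟨a, ts⟩ := t
    cases ts with
    | nil => rw [my_leaves_nil, my_size_node]; simp only [List.map_nil, List.sum_nil]; omega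
    | cons c ts' =>
      rw [my_leaves_node, my_size_node]
      have hlen : (c :: ts').length ≤ k := le_trans (my_length_le_rank a _) hrk
      have hsum : ∀ x ∈ c :: ts',
          k * x.leaves + x.size ≤ k * x.size + 1 := by
        intro x hx
        have h1 : x.size ≤ ((c :: ts').map OTree.size).sum := my_size_child_le a _ hx
        have h2 : (OTree.node a (c :: ts')).size ≤ n + 1 := hn
        rw [my_size_node] at h2
        exact ih x (by omega) (le_trans (my_rank_child_le a _ hx) hrk)
      -- sum the inequality over the list
      have key : ∀ L : List (OTree α), (∀ x ∈ L, k * x.leaves + x.size ≤ k * x.size + 1) →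
          k * (L.map OTree.leaves).sum + (L.map OTree.size).sum
            ≤ k * (L.map OTree.size).sum + L.length := by
        intro L
        induction L with
        | nil => simp
        | cons y L' ihL =>
          intro hL
          have h1 := hL y List.mem_cons_self
          have h2 := ihL (fun x hx => hL x (List.mem_cons_of_mem y hx))
          simp only [List.map_cons, List.sum_cons, List.length_cons]
          ring_nf
          ring_nf at h1 h2
          omega
      have := key (c :: ts') hsum
      have hlen2 : 1 ≤ (c :: ts').length := by simp
      ring_nf
      ring_nf at this
      omega

private theorem my_sum_map_get {α : Type} (ts : List (OTree α)) (f : OTree α → ℕ) :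
    (ts.map f).sum = ∑ l : Fin ts.length, f (ts.get l) := by
  conv_lhs => rw [← List.ofFn_get ts]
  rw [List.map_ofFn, List.sum_ofFn]
  simp

/-- Sum bound: with two indices dominating the sizes of all other entries. -/
private theorem my_sum_bound {α : Type} (k : ℕ) (ts : List (OTree α))
    (hlen2 : 2 ≤ ts.length) (hlenk : ts.length ≤ k)
    (i j : Fin ts.length) (hij : i ≠ j)
    (hmax : ∀ l : Fin ts.length, l ≠ i → l ≠ j →
      (ts.get l).size ≤ (ts.get i).size ∧ (ts.get l).size ≤ (ts.get j).size) :
    (ts.map OTree.size).sum + min (ts.get i).size (ts.get j).size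
      ≤ (ts.get i).size + (ts.get j).size + (k - 1) * min (ts.get i).size (ts.get j).size := by
  rw [my_sum_map_get]
  set m := min (ts.get i).size (ts.get j).size with hm
  have hi : i ∈ Finset.univ := Finset.mem_univ i
  have hj : j ∈ Finset.univ.erase i := Finset.mem_erase.mpr ⟨Ne.symm hij, Finset.mem_univ j⟩
  rw [← Finset.add_sum_erase _ _ hi, ← Finset.add_sum_erase _ _ hj]
  have hbound : ∀ l ∈ (Finset.univ.erase i).erase j, (ts.get l).size ≤ m := by
    intro l hl
    have h1 : l ≠ j := (Finset.mem_erase.mp hl).1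
    have h2 : l ≠ i := (Finset.mem_erase.mp (Finset.mem_erase.mp hl).2).1
    have := hmax l h2 h1
    exact le_min this.1 this.2
  have hsum := Finset.sum_le_card_nsmul _ _ m hbound
  have hcard : ((Finset.univ.erase i).erase j).card = ts.length - 2 := by
    rw [Finset.card_erase_of_mem hj, Finset.card_erase_of_mem hi]
    simp only [Finset.card_univ, Fintype.card_fin]
    omega
  rw [hcard] at hsum
  simp only [smul_eq_mul] at hsum
  have : (ts.length - 2) * m + m ≤ (k - 1) * m := by
    have h1 : ts.length - 2 + 1 ≤ k - 1 := by omega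
    calc (ts.length - 2) * m + m = (ts.length - 2 + 1) * m := by ring
    _ ≤ (k - 1) * m := Nat.mul_le_mul_right m h1
  omega

/-- Main induction: `ℓ(σ t) ≥ (((k-1)|t|+1)/k)^{log_k 2}`. -/
private theorem my_main {α : Type} (k : ℕ) (hk : 2 ≤ k)
    (σ : OTree α → OTree α) (hσ : SigmaSpec σ) : ∀ n (t : OTree α), t.size ≤ n →
    t.rank ≤ k → Branching t →
    ((((k : ℝ) - 1) * t.size + 1) / k) ^ (Real.logb k 2) ≤ ((σ t).leaves : ℝ) := by
  have hK2 : (2:ℝ) ≤ (k:ℝ) := by exact_mod_cast hk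
  have hK0 : (0:ℝ) < (k:ℝ) := by linarith
  have hp0 : 0 ≤ Real.logb k 2 := (Real.logb_pos (by linarith) one_lt_two).le
  intro n
  induction n with
  | zero => intro t h; have := my_size_pos t; omega
  | succ n ih =>
    intro t hn hrk hbr
    obtain ⟨a, ts⟩ := t
    obtain ⟨hbr1, hbr2⟩ := my_branching_node hbr
    rcases hbr1 with h0 | h2
    · -- leaf
      have hnil : ts = [] := List.length_eq_zero_iff.mp h0
      subst hnil
      rw [(hσ a []).1 rfl, my_leaves_nil, my_size_node]
      simp only [List.map_nil, List.sum_nil]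
      push_cast
      rw [show ((k:ℝ) - 1) * 1 + 1 = (k:ℝ) by ring, div_self (by linarith)]
      simp [Real.one_rpow]
    · -- at least two children
      obtain ⟨i, j, hij, hmax, heq⟩ := (hσ a ts).2.2 h2
      rw [heq]
      rw [my_leaves_node]
      simp only [List.map_cons, List.map_nil, List.sum_cons, List.sum_nil, Nat.add_zero]
      -- facts about the children
      have hmemi : ts.get i ∈ ts := List.get_mem ts i
      have hmemj : ts.get j ∈ ts := List.get_mem ts j
      have hsize : (OTree.node a ts).size ≤ n + 1 := hn
      rw [my_size_node] at hsize
      have hchild : ∀ c ∈ ts, c.size ≤ n ∧ c.rank ≤ k ∧ Branching c := by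
        intro c hc
        have h1 := my_size_child_le a ts hc
        exact ⟨by omega, le_trans (my_rank_child_le a ts hc) hrk, hbr2 c hc⟩
      obtain ⟨hsi, hri, hbi⟩ := hchild _ hmemi
      obtain ⟨hsj, hrj, hbj⟩ := hchild _ hmemj
      have IHi := ih (ts.get i) hsi hri hbi
      have IHj := ih (ts.get j) hsj hrj hbj
      have hlenk : ts.length ≤ k := le_trans (my_length_le_rank a ts) hrk
      have hsum := my_sum_bound k ts h2 hlenk i j hij hmax
      -- pass to reals
      set si := (ts.get i).size with hsidef
      set sj := (ts.get j).size with hsjdef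
      set M := max si sj with hMdef
      set m := min si sj with hmdef
      have hm1 : 1 ≤ m := le_min (my_size_pos _) (my_size_pos _)
      have hS : (OTree.node a ts).size ≤ 1 + M + (k - 1) * m := by
        rw [my_size_node]
        have : si + sj = M + m := by omega
        omega
      set p := Real.logb k 2 with hpdef
      set X : ℝ := (((k:ℝ) - 1) * M + 1) / k with hXdef
      set Y : ℝ := (((k:ℝ) - 1) * m + 1) / k with hYdef
      have hmM : (m:ℝ) ≤ (M:ℝ) := by exact_mod_cast min_le_max
      have hm1R : (1:ℝ) ≤ (m:ℝ) := by exact_mod_cast hm1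
      have hY0 : 0 < Y := by
        rw [hYdef]
        apply div_pos ?_ hK0
        nlinarith
      have hXY : Y ≤ X := by
        rw [hXdef, hYdef]
        gcongr
        linarith
      have hSR : ((OTree.node a ts).size : ℝ) ≤ 1 + (M:ℝ) + ((k:ℝ) - 1) * (m:ℝ) := by
        have h' : ((OTree.node a ts).size : ℝ) ≤ ((1 + M + (k - 1) * m : ℕ) : ℝ) := by
          exact_mod_cast hS
        calc ((OTree.node a ts).size : ℝ) ≤ ((1 + M + (k - 1) * m : ℕ) : ℝ) := h'
          _ = 1 + (M:ℝ) + (((k - 1 : ℕ)):ℝ) * (m:ℝ) := by push_cast; ring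
          _ ≤ 1 + (M:ℝ) + ((k:ℝ) - 1) * (m:ℝ) := by
              have : (((k - 1 : ℕ)):ℝ) = (k:ℝ) - 1 := by
                rw [Nat.cast_sub (by omega : 1 ≤ k)]; norm_num
              rw [this]
      have hgoal1 : (((k:ℝ) - 1) * ((OTree.node a ts).size : ℝ) + 1) / k
          ≤ X + ((k:ℝ) - 1) * Y := by
        have e : X + ((k:ℝ) - 1) * Y
            = (((k:ℝ) - 1) * (1 + (M:ℝ) + ((k:ℝ) - 1) * (m:ℝ)) + 1) / k := by
          rw [hXdef, hYdef]
          field_simp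
          ring
        rw [e]
        gcongr
        linarith
      have hbase : (0:ℝ) ≤ (((k:ℝ) - 1) * ((OTree.node a ts).size : ℝ) + 1) / k := by
        apply div_nonneg ?_ hK0.le
        have : (0:ℝ) ≤ ((OTree.node a ts).size : ℝ) := Nat.cast_nonneg _
        nlinarith
      have chain : ((((k:ℝ) - 1) * ((OTree.node a ts).size : ℝ) + 1) / k) ^ p
          ≤ X ^ p + Y ^ p := by
        calc ((((k:ℝ) - 1) * ((OTree.node a ts).size : ℝ) + 1) / k) ^ p
            ≤ (X + ((k:ℝ) - 1) * Y) ^ p := Real.rpow_le_rpow hbase hgoal1 hp0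
          _ ≤ X ^ p + Y ^ p := my_key_ineq (k:ℝ) hK2 X Y hY0 hXY
      have hfin : X ^ p + Y ^ p
          ≤ ((σ (ts.get i)).leaves : ℝ) + ((σ (ts.get j)).leaves : ℝ) := by
        rcases le_total si sj with hc | hc
        · have hM' : M = sj := max_eq_right hc
          have hm' : m = si := min_eq_left hc
          rw [hXdef, hYdef, hM', hm']
          exact add_le_add IHj IHi |>.trans (by linarith)
        · have hM' : M = si := max_eq_left hc
          have hm' : m = sj := min_eq_right hc
          rw [hXdef, hYdef, hM', hm']
          exact add_le_add IHi IHj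
      push_cast
      linarith [chain, hfin]

end Stmt1Aux

/-- For `k ≥ 2` and a tree `t` of rank at most `k` in which every node
is a leaf or has at least two children, `ℓ(σ(t)) ≥ ℓ(t)^{log_k 2}`. -/
theorem statement1 {α : Type} (k : ℕ) (hk : 2 ≤ k)
    (σ : OTree α → OTree α) (hσ : SigmaSpec σ)
    (t : OTree α) (hrk : t.rank ≤ k) (hbr : Branching t) :
    (t.leaves : ℝ) ^ (Real.logb k 2) ≤ ((σ t).leaves : ℝ) := by
  have hK2 : (2:ℝ) ≤ (k:ℝ) := by exact_mod_cast hk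
  have hK0 : (0:ℝ) < (k:ℝ) := by linarith
  have hp0 : 0 ≤ Real.logb k 2 := (Real.logb_pos (by linarith) one_lt_two).le
  have h1 := my_main k hk σ hσ t.size t le_rfl hrk hbr
  have h2 : (t.leaves : ℝ) ≤ (((k:ℝ) - 1) * t.size + 1) / k := by
    have hℕ := my_leaves_size k t.size t le_rfl hrk
    have hcast : (k:ℝ) * t.leaves + t.size ≤ (k:ℝ) * t.size + 1 := by exact_mod_cast hℕ
    have hs1 : (1:ℝ) ≤ (t.size : ℝ) := by exact_mod_cast my_size_pos t
    rw [le_div_iff₀ hK0]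
    nlinarith
  calc (t.leaves : ℝ) ^ (Real.logb k 2)
      ≤ ((((k:ℝ) - 1) * t.size + 1) / k) ^ (Real.logb k 2) :=
        Real.rpow_le_rpow (Nat.cast_nonneg _) h2 hp0
    _ ≤ ((σ t).leaves : ℝ) := h1
end

section
/- For every pNFA A and every string w ∈ Σ*: w ∈ L(A) if and only if the backtracking run btr_A(w) succeeds (i.e., the label Acc occurs in it). -/
/-! ## Auxiliary development for statement 2 -/

section Statement2Aux

set_option linter.unusedSectionVars false

variable {A Q : Type} [DecidableEq Q] [Fintype Q]

/-- Acceptance with priority-counter restriction: `PAcc M q w C` means there is an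
accepting path from `q` reading `w` such that every ε-step taken before the first
symbol is consumed, from a state `p` to its `i`-th ε-successor, satisfies `i > C p`. -/
inductive PAcc (M : PNFA A Q) : Q → List A → (Q → ℕ) → Prop
  | fin {q C} : M.final q = true → PAcc M q [] C
  | eps {q w C} (i : ℕ) (h : i - 1 < (M.d2 q).length) : M.isQ2 q = true → C q < i →
      PAcc M ((M.d2 q)[i-1]) w C → PAcc M q w C
  | sym {q a w q' C} : M.isQ2 q = false → M.d1 q a = some q' →
      PAcc M q' w (fun _ => 0) → PAcc M q (a :: w) C

/-- `PAcc` with an explicit bound on the number of ε-steps before the first symbol. -/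
inductive PAccH (M : PNFA A Q) : ℕ → Q → List A → (Q → ℕ) → Prop
  | fin {n q C} : M.final q = true → PAccH M n q [] C
  | eps {n q w C} (i : ℕ) (h : i - 1 < (M.d2 q).length) : M.isQ2 q = true → C q < i →
      PAccH M n ((M.d2 q)[i-1]) w C → PAccH M (n+1) q w C
  | sym {n q a w q' C} : M.isQ2 q = false → M.d1 q a = some q' →
      PAcc M q' w (fun _ => 0) → PAccH M n q (a :: w) C

lemma PAcc_of_PAccH {M : PNFA A Q} {n q w C} (h : PAccH M n q w C) : PAcc M q w C := by
  induction h with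
  | fin h => exact .fin h
  | eps i hl h1 h2 _ ih => exact .eps i hl h1 h2 ih
  | sym h1 h2 h3 => exact .sym h1 h2 h3

lemma PAccH_of_PAcc {M : PNFA A Q} {q w C} (h : PAcc M q w C) : ∃ n, PAccH M n q w C := by
  induction h with
  | fin h => exact ⟨0, .fin h⟩
  | eps i hl h1 h2 _ ih => obtain ⟨n, hn⟩ := ih; exact ⟨n+1, .eps i hl h1 h2 hn⟩
  | sym h1 h2 h3 => exact ⟨0, .sym h1 h2 h3⟩

lemma PAcc.mono {M : PNFA A Q} {q w} {C' : Q → ℕ} (h : PAcc M q w C') :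
    ∀ C : Q → ℕ, (∀ p, C p ≤ C' p) → PAcc M q w C := by
  induction h with
  | fin h => exact fun C _ => .fin h
  | eps i hl h1 h2 _ ih =>
      exact fun C hle => .eps i hl h1 (lt_of_le_of_lt (hle _) h2) (ih C hle)
  | sym h1 h2 h3 => exact fun C _ => .sym h1 h2 h3

/-- Key strengthening lemma: if no ε-successor of `q` with index in `(C q, i)` admits an
accepting run under `C` on the same `w`, then any accepting run under `C` can be lifted
to the counter `C[q ↦ i]`, possibly rerooted at the `i`-th ε-successor of `q`. -/
lemma PAcc.strengthen {M : PNFA A Q} {w : List A} {C : Q → ℕ} {q : Q} {i : ℕ}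
    (hmin : ∀ j (hj : j - 1 < (M.d2 q).length), C q < j → j < i →
      ¬ PAcc M ((M.d2 q)[j-1]'hj) w C) :
    ∀ n p, PAccH M n p w C →
      PAcc M p w (Function.update C q i) ∨
        ∃ h : i - 1 < (M.d2 q).length, PAcc M ((M.d2 q)[i-1]) w (Function.update C q i) := by
  intro n
  induction n using Nat.strong_induction_on with
  | _ n ih =>
    intro p hp
    cases hp with
    | fin h => exact Or.inl (.fin h)
    | sym h1 h2 h3 => exact Or.inl (.sym h1 h2 h3)
    | eps k hk h2 hCk sub =>
      rcases ih _ (Nat.lt_succ_self _) _ sub with hL | hR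
      · by_cases hpq : p = q
        · subst hpq
          rcases lt_trichotomy k i with hki | hki | hki
          · exact absurd (PAcc_of_PAccH sub) (hmin k hk hCk hki)
          · subst hki; exact Or.inr ⟨hk, hL⟩
          · refine Or.inl (.eps k hk h2 ?_ hL)
            simpa using hki
        · refine Or.inl (.eps k hk h2 ?_ hL)
          simpa [Function.update, hpq] using hCk
      · exact Or.inr hR

lemma PAcc.exists_strengthened {M : PNFA A Q} {q : Q} {w : List A} {C : Q → ℕ}
    (h : PAcc M q w C) (h2 : M.isQ2 q = true) (h3 : ¬(M.final q = true ∧ w = [])) :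
    ∃ i, ∃ hl : i - 1 < (M.d2 q).length, C q < i ∧
      PAcc M ((M.d2 q)[i-1]) w (Function.update C q i) := by
  set S : Set ℕ := {i | C q < i ∧ ∃ hl : i - 1 < (M.d2 q).length,
    PAcc M ((M.d2 q)[i-1]) w C} with hS
  have hne : S.Nonempty := by
    cases h with
    | fin hf => exact absurd ⟨hf, rfl⟩ h3
    | eps i hl h1 hCi sub => exact ⟨i, hCi, hl, sub⟩
    | sym h1 => simp [h1] at h2
  set i := sInf S with hi
  obtain ⟨hCi, hl, hacc⟩ := Nat.sInf_mem hne
  obtain ⟨n, hn⟩ := PAccH_of_PAcc hacc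
  have hmin : ∀ j (hj : j - 1 < (M.d2 q).length), C q < j → j < i →
      ¬ PAcc M ((M.d2 q)[j-1]'hj) w C := by
    intro j hjl hCj hji hj
    exact Nat.notMem_of_lt_sInf hji ⟨hCj, hjl, hj⟩
  rcases PAcc.strengthen hmin n _ hn with hL | ⟨hl', hR⟩
  · exact ⟨i, hl, hCi, hL⟩
  · exact ⟨i, hl', hCi, hR⟩

end Statement2Aux
section Statement2Aux2

set_option linter.unusedSectionVars false

variable {A Q : Type} [DecidableEq Q] [Fintype Q]

lemma PAcc_of_steps {M : PNFA A Q} {q w r} (h : M.toENFA.Steps q w r)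
    (hr : M.final r = true) : PAcc M q w (fun _ => 0) := by
  induction h with
  | refl => exact .fin hr
  | @eps p q' r' w hm _ ih =>
      by_cases h2 : M.isQ2 p
      · simp only [PNFA.toENFA, h2, if_true] at hm
        obtain ⟨k, hk, hget⟩ := List.mem_iff_getElem.mp hm
        refine PAcc.eps (k+1) (by simpa using hk) h2 (Nat.succ_pos _) ?_
        simpa [hget] using ih hr
      · simp only [PNFA.toENFA, h2, if_false] at hm
        exact absurd hm (Set.notMem_empty _)
  | @sym p q' r' a w hm _ ih =>
      by_cases h2 : M.isQ2 p
      · simp only [PNFA.toENFA, h2, if_true] at hm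
        exact absurd hm (Set.notMem_empty _)
      · simp only [PNFA.toENFA, h2, if_false] at hm
        exact PAcc.sym (by simpa using h2) hm (ih hr)

lemma steps_of_PAcc {M : PNFA A Q} {q w C} (h : PAcc M q w C) :
    ∃ r, M.final r = true ∧ M.toENFA.Steps q w r := by
  induction h with
  | @fin q C hf => exact ⟨q, hf, .refl q⟩
  | @eps q w C i hl h1 h2 _ ih =>
      obtain ⟨r, hr, hst⟩ := ih
      refine ⟨r, hr, .eps ?_ hst⟩
      simp only [PNFA.toENFA, h1, if_true]
      exact List.getElem_mem hl
  | @sym q a w q' C h1 h2 _ ih =>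
      obtain ⟨r, hr, hst⟩ := ih
      refine ⟨r, hr, .sym ?_ hst⟩
      simp [PNFA.toENFA, h1, h2]

lemma anyLabel_node {α : Type} (p : α → Bool) (l : α) (ts : List (OTree α)) :
    OTree.anyLabel p (.node l ts) = (p l || ts.any (OTree.anyLabel p)) := by
  rw [OTree.anyLabel]
  congr 1
  rw [Bool.eq_iff_iff]
  simp [List.any_eq_true]

lemma succeeds_node {l : BLab Q} {ts : List (OTree (BLab Q))} :
    OTree.succeeds (.node l ts) =
      ((match l with | BLab.acc => true | _ => false) || ts.any OTree.succeeds) := by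
  rw [OTree.succeeds, anyLabel_node]
  rfl

lemma any_firstSucc (ts : List (OTree (BLab Q))) :
    (firstSucc ts).any OTree.succeeds = ts.any OTree.succeeds := by
  induction ts with
  | nil => rfl
  | cons t ts ih =>
      rw [firstSucc]
      by_cases h : t.succeeds
      · simp [h]
      · simp [h, ih]

end Statement2Aux2
section Statement2Main

set_option linter.unusedSectionVars false

variable {A Q : Type} [DecidableEq Q] [Fintype Q]

lemma succeeds_btr_iff (M : PNFA A Q) (q : Q) (w : List A) (C : Q → ℕ) :
    (btr M q w C).succeeds = true ↔ PAcc M q w C := by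
  induction q, w, C using btr.induct M with
  | case1 q w C h =>
      rw [btr.eq_def, if_pos h]
      obtain ⟨hf, hw⟩ := h
      rw [List.isEmpty_iff] at hw
      subst hw
      simp only [succeeds_node, List.any_cons, List.any_nil, succeeds_node]
      simpa using PAcc.fin (C := C) hf
  | case2 q w C h1 h2 h3 =>
      rw [btr.eq_def, if_neg h1, if_pos h2, dif_pos h3]
      simp only [succeeds_node, List.any_cons, List.any_nil]
      constructor
      · intro h; simp at h
      · intro hp
        exfalso
        cases hp with
        | fin hf => exact h1 ⟨hf, by simp⟩
        | eps i hl _ hCi _ => omega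
        | sym hq2 => rw [hq2] at h2; exact Bool.noConfusion h2
  | case3 q w C h1 h2 h3 ih =>
      rw [btr.eq_def, if_neg h1, if_pos h2, dif_neg h3]
      rw [succeeds_node, any_firstSucc]
      simp only [List.any_eq_true, List.mem_map, List.mem_attach, true_and,
        Bool.false_or]
      have hw : ¬(M.final q = true ∧ w = []) := by
        intro ⟨ha, hb⟩; exact h1 ⟨ha, by simp [hb]⟩
      constructor
      · rintro ⟨t, ⟨⟨x, hx⟩, rfl⟩, hsx⟩
        have hx' := hx
        rw [List.mem_range'_1] at hx'
        have hacc : PAcc M ((M.d2 q)[x-1]'(by omega)) w (Function.update C q x) :=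
          (ih ⟨x, hx⟩).mp hsx
        have hacc' : PAcc M ((M.d2 q)[x-1]'(by omega)) w C := by
          refine hacc.mono C ?_
          intro p
          by_cases hpq : p = q
          · subst hpq; rw [Function.update_self]; omega
          · rw [Function.update_of_ne hpq]
        exact PAcc.eps x (by omega) h2 (by omega) hacc'
      · intro hp
        obtain ⟨i, hl, hCi, hacc⟩ := hp.exists_strengthened h2 hw
        have hmem : i ∈ List.range' (C q + 1) ((M.d2 q).length - C q) := by
          rw [List.mem_range'_1]; omega
        exact ⟨_, ⟨⟨i, hmem⟩, rfl⟩, (ih ⟨i, hmem⟩).mpr hacc⟩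
  | case4 q C h2 h1 =>
      rw [btr.eq_def, if_neg h1]
      rw [Bool.not_eq_true] at h2
      rw [if_neg (by simp [h2])]
      simp only []
      simp only [succeeds_node, List.any_cons, List.any_nil]
      constructor
      · intro h; simp at h
      · intro hp
        exfalso
        cases hp with
        | fin hf => exact h1 ⟨hf, by simp⟩
        | eps i hl hq2 => rw [hq2] at h2; exact Bool.noConfusion h2
  | case5 q C h2 a w' q' hd1 h1 ih =>
      rw [btr.eq_def, if_neg h1]
      rw [Bool.not_eq_true] at h2
      rw [if_neg (by simp [h2])]
      simp only []
      simp only [hd1, succeeds_node, List.any_cons, List.any_nil, Bool.false_or,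
        Bool.or_false]
      rw [ih]
      constructor
      · intro hp; exact PAcc.sym h2 hd1 hp
      · intro hp
        cases hp with
        | eps i hl hq2 => rw [hq2] at h2; exact Bool.noConfusion h2
        | sym hq2 hd1' hp' =>
            rw [hd1] at hd1'
            injection hd1' with he
            rw [he]; exact hp'
  | case6 q C h2 a w' hd1 h1 =>
      rw [btr.eq_def, if_neg h1]
      rw [Bool.not_eq_true] at h2
      rw [if_neg (by simp [h2])]
      simp only []
      simp only [hd1, succeeds_node, List.any_cons, List.any_nil]
      constructor
      · intro h; simp at h
      · intro hp
        exfalso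
        cases hp with
        | eps i hl hq2 => rw [hq2] at h2; exact Bool.noConfusion h2
        | sym hq2 hd1' => rw [hd1] at hd1'; exact nomatch hd1'

end Statement2Main
/-- `w ∈ L(A)` iff the backtracking run of `A` on `w` succeeds. -/
theorem statement2 {A Q : Type} [DecidableEq Q] [Fintype Q] (M : PNFA A Q) (w : List A) :
    w ∈ M.toENFA.Lang ↔ (btrW M w).succeeds = true := by
  rw [btrW, succeeds_btr_iff]
  constructor
  · rintro ⟨r, hr, hst⟩
    have hr' : M.final r = true := hr
    exact PAcc_of_steps hst hr'
  · intro hp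
    obtain ⟨r, hr, hst⟩ := steps_of_PAcc hp
    exact ⟨r, hr, hst⟩
end

section
/- For every pNFA A and every string w ∈ Σ*: if the backtracking run btr_A(w) succeeds, then the sequence of states labeling the rightmost root-to-leaf path of btr_A(w) (with the final leaf label Acc removed) is an accepting run of the NFA Ā corresponding to A on w. -/
/-- `RunFrom N q w ps`: `ps` is (the state sequence of) a run of the ε-NFA `N`
starting in `q`, reading exactly `w`, and `ps` lists all visited states in order. -/
inductive RunFrom {A Q : Type} (N : ENFA A Q) : Q → List A → List Q → Prop
  | last (q : Q) : RunFrom N q [] [q]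
  | eps {p q : Q} {w : List A} {ps : List Q} :
      q ∈ N.tr p none → RunFrom N q w ps → RunFrom N p w (p :: ps)
  | sym {p q : Q} {a : A} {w : List A} {ps : List Q} :
      q ∈ N.tr p (some a) → RunFrom N q w ps → RunFrom N p (a :: w) (p :: ps)

/-- `ps` is an accepting run of `N` on `w`. -/
def AccRun {A Q : Type} (N : ENFA A Q) (w : List A) (ps : List Q) : Prop :=
  RunFrom N N.init w ps ∧ ∃ q ∈ N.F, ps.getLast? = some q

/-- Labels along the rightmost root-to-leaf path of a tree. -/
def rightPath {α : Type} : OTree α → List α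
  | .node l ts =>
    match h : ts.getLast? with
    | none => [l]
    | some t => l :: rightPath t
decreasing_by
  have ht : t ∈ ts := by
    obtain ⟨hne, rfl⟩ := List.mem_getLast?_eq_getLast (l := ts) (x := t) h
    exact List.getLast_mem hne
  have := List.sizeOf_lt_of_mem ht
  simp only [OTree.node.sizeOf_spec]
  omega

lemma succeeds_node_iff {Q : Type} (l : BLab Q) (ts : List (OTree (BLab Q))) :
    (OTree.node l ts).succeeds = true ↔
      l = BLab.acc ∨ ∃ t ∈ ts, t.succeeds = true := by
  rw [OTree.succeeds, OTree.anyLabel]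
  simp only [Bool.or_eq_true, List.any_eq_true, List.mem_attach, true_and, Subtype.exists,
    exists_prop]
  constructor
  · rintro (hl | ⟨t, ht, hs⟩)
    · left; cases l <;> simp_all
    · exact Or.inr ⟨t, ht, hs⟩
  · rintro (rfl | ⟨t, ht, hs⟩)
    · exact Or.inl rfl
    · exact Or.inr ⟨t, ht, hs⟩

lemma rej_not_succeeds {Q : Type} (q : Q) :
    (OTree.node (BLab.st q) [OTree.node BLab.rej []]).succeeds = false := by
  by_contra h
  rw [Bool.not_eq_false, succeeds_node_iff] at h
  rcases h with h | ⟨t, ht, hs⟩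
  · cases h
  · simp only [List.mem_singleton] at ht
    subst ht
    rw [succeeds_node_iff] at hs
    simp at hs

lemma firstSucc_subset {Q : Type} {L : List (OTree (BLab Q))} {t : OTree (BLab Q)}
    (h : t ∈ firstSucc L) : t ∈ L := by
  induction L with
  | nil => simp [firstSucc] at h
  | cons a l ih =>
    rw [firstSucc] at h
    split at h
    · simp_all
    · rcases List.mem_cons.mp h with rfl | h
      · exact List.mem_cons_self
      · exact List.mem_cons_of_mem _ (ih h)

lemma fs_last {Q : Type} {L : List (OTree (BLab Q))}
    (h : ∃ t ∈ firstSucc L, t.succeeds = true) :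
    ∃ tl, (firstSucc L).getLast? = some tl ∧ tl.succeeds = true ∧ tl ∈ L := by
  induction L with
  | nil => simp [firstSucc] at h
  | cons a l ih =>
    rw [firstSucc] at h ⊢
    by_cases ha : a.succeeds = true
    · rw [if_pos ha]
      exact ⟨a, rfl, ha, List.mem_cons_self⟩
    · rw [if_neg ha] at h ⊢
      obtain ⟨t, ht, hs⟩ := h
      rcases List.mem_cons.mp ht with rfl | ht
      · exact absurd hs ha
      · obtain ⟨tl, h1, h2, h3⟩ := ih ⟨t, ht, hs⟩
        have hne : firstSucc l ≠ [] := by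
          intro hnil; rw [hnil] at h1; simp at h1
        refine ⟨tl, ?_, h2, List.mem_cons_of_mem _ h3⟩
        rcases List.exists_cons_of_ne_nil hne with ⟨b, l', heq⟩
        rw [heq] at h1 ⊢
        rw [List.getLast?_cons_cons]
        exact h1

lemma rightPath_last {α : Type} {l : α} {ts : List (OTree α)} {t : OTree α}
    (h : ts.getLast? = some t) : rightPath (.node l ts) = l :: rightPath t := by
  rw [rightPath]
  split
  · simp_all
  · rename_i t' h'
    rw [h] at h'
    injection h' with h''
    rw [h'']
theorem btr_main {A Q : Type} [DecidableEq Q] [Fintype Q] (M : PNFA A Q)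
    (q : Q) (w : List A) (C : Q → ℕ) (h : (btr M q w C).succeeds = true) :
    ∃ ps : List Q, rightPath (btr M q w C) = ps.map BLab.st ++ [BLab.acc] ∧
      RunFrom M.toENFA q w ps ∧ ∃ qf, M.final qf = true ∧ ps.getLast? = some qf := by
  rw [btr.eq_def] at h ⊢
  by_cases h1 : M.final q = true ∧ w.isEmpty = true
  · rw [if_pos h1] at h ⊢
    refine ⟨[q], ?_, ?_, q, h1.1, rfl⟩
    · rw [rightPath_last (List.getLast?_singleton), rightPath]
      rfl
    · have : w = [] := List.isEmpty_iff.mp h1.2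
      subst this; exact RunFrom.last q
  · rw [if_neg h1] at h ⊢
    by_cases h2 : M.isQ2 q = true
    · rw [if_pos h2] at h ⊢
      by_cases hik : (M.d2 q).length < C q + 1
      · rw [dif_pos hik] at h
        rw [rej_not_succeeds] at h
        exact absurd h (by simp)
      · rw [dif_neg hik] at h ⊢
        rw [succeeds_node_iff] at h
        rcases h with h | h
        · exact absurd h (by simp)
        obtain ⟨tl, hlast, hsucc, hmem⟩ := fs_last h
        obtain ⟨x, hx, rfl⟩ := List.mem_map.mp hmem
        have hxr := x.2
        rw [List.mem_range'_1] at hxr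
        obtain ⟨ps', hr, hrun, qf, hqf, hlastps⟩ :=
          btr_main M ((M.d2 q)[x.1 - 1]'(by omega)) w (Function.update C q x.1) hsucc
        refine ⟨q :: ps', ?_, ?_, qf, hqf, ?_⟩
        · rw [rightPath_last hlast, hr]; rfl
        · refine RunFrom.eps ?_ hrun
          simp only [PNFA.toENFA, h2, if_pos]
          exact List.getElem_mem _
        · have hne : ps' ≠ [] := by intro hnil; rw [hnil] at hlastps; simp at hlastps
          rcases List.exists_cons_of_ne_nil hne with ⟨b, l', rfl⟩
          rw [List.getLast?_cons_cons]; exact hlastps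
    · rw [if_neg h2] at h ⊢
      cases w with
      | nil =>
        rw [rej_not_succeeds] at h
        exact absurd h (by simp)
      | cons a w' =>
        cases hd : M.d1 q a with
        | some q' =>
          simp only [hd] at h ⊢
          rw [succeeds_node_iff] at h
          rcases h with h | h
          · exact absurd h (by simp)
          obtain ⟨t, ht, hsucc⟩ := h
          simp only [List.mem_singleton] at ht
          subst ht
          obtain ⟨ps', hr, hrun, qf, hqf, hlastps⟩ := btr_main M q' w' (fun _ => 0) hsucc
          refine ⟨q :: ps', ?_, ?_, qf, hqf, ?_⟩
          · rw [rightPath_last (List.getLast?_singleton), hr]; rfl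
          · refine RunFrom.sym ?_ hrun
            simp only [PNFA.toENFA, h2, if_neg]
            simpa using hd
          · have hne : ps' ≠ [] := by intro hnil; rw [hnil] at hlastps; simp at hlastps
            rcases List.exists_cons_of_ne_nil hne with ⟨b, l', rfl⟩
            rw [List.getLast?_cons_cons]; exact hlastps
        | none =>
          simp only [hd] at h
          rw [rej_not_succeeds] at h
          exact absurd h (by simp)

termination_by (w.length, cMeasure M C)
decreasing_by
  · apply Prod.Lex.right
    have hx2 := x.2; rw [List.mem_range'_1] at hx2
    apply Finset.sum_lt_sum
    · intro p _
      by_cases hp : p = q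
      · subst hp; simp only [Function.update_self]; omega
      · simp only [Function.update_of_ne hp]; omega
    · exact ⟨q, Finset.mem_univ q, by simp only [Function.update_self]; omega⟩
  · apply Prod.Lex.left
    have heq : w = a :: w' := by assumption
    rw [heq]
    simp

/-- If the backtracking run of `A` on `w` succeeds, then the sequence of
states labeling its rightmost root-to-leaf path (with the final leaf label `Acc` removed)
is an accepting run of the NFA `Ā` on `w`. -/
theorem statement3 {A Q : Type} [DecidableEq Q] [Fintype Q] (M : PNFA A Q) (w : List A)
    (h : (btrW M w).succeeds = true) :
    ∃ ps : List Q,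
      rightPath (btrW M w) = ps.map BLab.st ++ [BLab.acc] ∧
      AccRun M.toENFA w ps := by
  obtain ⟨ps, h1, h2, qf, h3, h4⟩ := btr_main M M.init w (fun _ => 0) h
  exact ⟨ps, h1, h2, qf, h3, h4⟩
end

section
/- Let A be a pNFA and let A'' be the pNFA obtained from A by δ2-flattening without applying r̄, i.e., A''=(Q1,Q2,Σ,q0,δ1,δ2'',F'') with δ2''(q)=d(q,0) for all q∈Q2 and F''={q : some state of F occurs in d(q,0)}. Then for every string w ∈ Σ* and every node v of the backtracking run btr_{A''}(w): if two children of v carry the same root label, then the subtrees of btr_{A''}(w) rooted at these two children are identical. -/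
/-! ## δ₂-flattening -/

/-- The function `d(q, C)` of the flattening construction. -/
def dFlat {A Q : Type} [DecidableEq Q] [Fintype Q] (M : PNFA A Q) (q : Q) (C : Q → ℕ) :
    List Q :=
  if M.isQ2 q = true then
    if h : C q < (M.d2 q).length then
      (((M.d2 q).drop (C q)).attach.map
        (fun p => dFlat M p.1 (Function.update C q (C q + 1)))).flatten
    else []
  else [q]
termination_by cMeasure M C
decreasing_by
  apply Finset.sum_lt_sum
  · intro p _
    by_cases hp : p = q
    · subst hp; simp only [Function.update_self]; omega
    · simp only [Function.update_of_ne hp]; omega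
  · exact ⟨q, Finset.mem_univ q, by simp only [Function.update_self]; omega⟩

/-- `r̄`: remove all occurrences of each state beyond the first two, keeping the order. -/
def keepTwoAux {Q : Type} [DecidableEq Q] : List Q → List Q → List Q
  | _, [] => []
  | seen, q :: rest =>
    if 2 ≤ seen.count q then keepTwoAux seen rest
    else q :: keepTwoAux (q :: seen) rest

/-- `r̄`: remove all occurrences of each state beyond the first two, keeping the order. -/
def keepTwo {Q : Type} [DecidableEq Q] (l : List Q) : List Q := keepTwoAux [] l

/-- The δ₂-flattening `A'` of a pNFA `A`: `δ₂'(q) = r̄(d(q,0))` and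
`F' = {q : some state of F occurs in d(q,0)}`. -/
def PNFA.flatten {A Q : Type} [DecidableEq Q] [Fintype Q] (M : PNFA A Q) : PNFA A Q where
  isQ2 := M.isQ2
  init := M.init
  d1 := M.d1
  d2 q := keepTwo (dFlat M q (fun _ => 0))
  final q := (dFlat M q (fun _ => 0)).any M.final

/-- The δ₂-flattening of `A` *without* applying `r̄` (called `A''` in the paper):
`δ₂''(q) = d(q,0)` and `F'' = {q : some state of F occurs in d(q,0)}`. -/
def PNFA.flattenNoR {A Q : Type} [DecidableEq Q] [Fintype Q] (M : PNFA A Q) : PNFA A Q where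
  isQ2 := M.isQ2
  init := M.init
  d1 := M.d1
  d2 q := dFlat M q (fun _ => 0)
  final q := (dFlat M q (fun _ => 0)).any M.final

/-- Subtree relation on finite ordered trees. -/
inductive IsSubtree {α : Type} : OTree α → OTree α → Prop
  | refl (t : OTree α) : IsSubtree t t
  | child {s t : OTree α} {l : α} {ts : List (OTree α)} :
      t ∈ ts → IsSubtree s t → IsSubtree s (.node l ts)

lemma dFlat_Q1 {A Q : Type} [DecidableEq Q] [Fintype Q] (M : PNFA A Q) :
    ∀ q C p, p ∈ dFlat M q C → M.isQ2 p = false := by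
  refine dFlat.induct M (fun q C => ∀ p, p ∈ dFlat M q C → M.isQ2 p = false) ?_ ?_ ?_
  · intro q C h1 h2 ih p hp
    rw [dFlat] at hp
    rw [if_pos h1, dif_pos h2] at hp
    simp only [List.mem_flatten, List.mem_map, List.mem_attach, true_and,
      Subtype.exists] at hp
    obtain ⟨L, ⟨r, hr, rfl⟩, hp⟩ := hp
    exact ih ⟨r, hr⟩ p hp
  · intro q C h1 h2 p hp
    rw [dFlat, if_pos h1, dif_neg h2] at hp
    simp at hp
  · intro q C h1 p hp
    rw [dFlat, if_neg h1] at hp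
    simp only [List.mem_singleton] at hp
    subst hp
    simpa using h1

lemma btr_root {A Q : Type} [DecidableEq Q] [Fintype Q] (M : PNFA A Q) (q : Q)
    (w : List A) (C : Q → ℕ) : (btr M q w C).root = .st q := by
  rw [btr.eq_def]
  repeat' split
  all_goals rfl

lemma btr_Q1_const {A Q : Type} [DecidableEq Q] [Fintype Q] (M : PNFA A Q) (q : Q)
    (w : List A) (C C' : Q → ℕ) (h : M.isQ2 q = false) :
    btr M q w C = btr M q w C' := by
  conv_lhs => rw [btr.eq_def]
  conv_rhs => rw [btr.eq_def]
  simp only [h, Bool.false_eq_true, if_false]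

lemma firstSucc_mem {Q : Type} {l : List (OTree (BLab Q))} {t : OTree (BLab Q)}
    (h : t ∈ firstSucc l) : t ∈ l := by
  induction l with
  | nil => simpa [firstSucc] using h
  | cons a as ih =>
    rw [firstSucc] at h
    split at h
    · simp at h; simp [h]
    · rcases List.mem_cons.1 h with h | h
      · simp [h]
      · exact List.mem_cons_of_mem _ (ih h)

lemma childShape {A Q : Type} [DecidableEq Q] [Fintype Q] (N : PNFA A Q) (q : Q)
    (w : List A) (C : Q → ℕ) (l : BLab Q) (ts : List (OTree (BLab Q)))
    (heq : btr N q w C = .node l ts) (t : OTree (BLab Q)) (ht : t ∈ ts) :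
    t = .node .acc [] ∨ t = .node .rej [] ∨ ∃ q' w' C', t = btr N q' w' C' := by
  rw [btr.eq_def] at heq
  split at heq
  · injection heq with _ h; subst h; simp at ht; tauto
  split at heq
  · split at heq
    · injection heq with _ h; subst h; simp at ht; tauto
    · injection heq with _ h; subst h
      have := firstSucc_mem ht
      simp only [List.mem_map, List.mem_attach, true_and, Subtype.exists] at this
      obtain ⟨x, hx, rfl⟩ := this
      exact Or.inr (Or.inr ⟨_, _, _, rfl⟩)
  · split at heq
    · injection heq with _ h; subst h; simp at ht; tauto
    · split at heq
      · injection heq with _ h; subst h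
        simp at ht; subst ht
        exact Or.inr (Or.inr ⟨_, _, _, rfl⟩)
      · injection heq with _ h; subst h; simp at ht; tauto

lemma subtreeShape {A Q : Type} [DecidableEq Q] [Fintype Q] (N : PNFA A Q)
    {s t : OTree (BLab Q)} (hs : IsSubtree s t) :
    (t = .node .acc [] ∨ t = .node .rej [] ∨ ∃ q' w' C', t = btr N q' w' C') →
    s = .node .acc [] ∨ s = .node .rej [] ∨ ∃ q' w' C', s = btr N q' w' C' := by
  induction hs with
  | refl => exact id
  | child hmem hsub ih =>
    intro ht
    apply ih
    rcases ht with h | h | ⟨q', w', C', h⟩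
    · rw [OTree.node.injEq] at h
      rw [h.2] at hmem; simp at hmem
    · rw [OTree.node.injEq] at h
      rw [h.2] at hmem; simp at hmem
    · exact childShape N q' w' C' _ _ h.symm _ hmem


/-- In a backtracking run of the pNFA `A''` (the δ₂-flattening of `A`
without applying `r̄`), any two children of a node that carry the same root label are roots
of identical subtrees. -/
theorem statement12 {A Q : Type} [DecidableEq Q] [Fintype Q] (M : PNFA A Q) (w : List A)
    (s : OTree (BLab Q)) (hs : IsSubtree s (btrW M.flattenNoR w))
    (l : BLab Q) (ts : List (OTree (BLab Q))) (hval : s = .node l ts)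
    (i j : ℕ) (hi : i < ts.length) (hj : j < ts.length)
    (hroot : (ts[i]'hi).root = (ts[j]'hj).root) :
    ts[i]'hi = ts[j]'hj := by
  subst hval
  have hshape := subtreeShape M.flattenNoR hs
    (Or.inr (Or.inr ⟨M.flattenNoR.init, w, fun _ => 0, rfl⟩))
  rcases hshape with h | h | ⟨q, w', C, h⟩
  · rw [OTree.node.injEq] at h; rw [h.2] at hi; simp at hi
  · rw [OTree.node.injEq] at h; rw [h.2] at hi; simp at hi
  · rw [btr.eq_def] at h
    split at h
    · rw [OTree.node.injEq] at h
      have hlen : ts.length = 1 := by rw [h.2]; rfl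
      have : i = j := by omega
      subst this; rfl
    split at h
    next hq2 =>
      split at h
      · rw [OTree.node.injEq] at h
        have hlen : ts.length = 1 := by rw [h.2]; rfl
        have : i = j := by omega
        subst this; rfl
      · rw [OTree.node.injEq] at h
        obtain ⟨hl, hts⟩ := h
        subst hts
        have hmi := firstSucc_mem (List.getElem_mem hi)
        have hmj := firstSucc_mem (List.getElem_mem hj)
        simp only [List.mem_map, List.mem_attach, true_and, Subtype.exists] at hmi hmj
        obtain ⟨xi, hxi, hti⟩ := hmi
        obtain ⟨xj, hxj, htj⟩ := hmj
        rw [← hti, ← htj]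
        rw [← hti, ← htj, btr_root, btr_root] at hroot
        have hpq : ((M.flattenNoR.d2 q)[xi - 1]'(by
            rw [List.mem_range'_1] at hxi; omega)) = (M.flattenNoR.d2 q)[xj - 1]'(by
            rw [List.mem_range'_1] at hxj; omega) := by
          injection hroot
        have hQ1 : M.flattenNoR.isQ2 ((M.flattenNoR.d2 q)[xi - 1]'(by
            rw [List.mem_range'_1] at hxi; omega)) = false := by
          show M.isQ2 _ = false
          exact dFlat_Q1 M q (fun _ => 0) _ (List.getElem_mem _)
        rw [show ((M.flattenNoR.d2 q)[xj - 1]'(by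
            rw [List.mem_range'_1] at hxj; omega)) = (M.flattenNoR.d2 q)[xi - 1]'(by
            rw [List.mem_range'_1] at hxi; omega) from hpq.symm]
        exact btr_Q1_const _ _ _ _ _ hQ1
    · split at h
      · rw [OTree.node.injEq] at h
        have hlen : ts.length = 1 := by rw [h.2]; rfl
        have : i = j := by omega
        subst this; rfl
      · split at h <;>
        · rw [OTree.node.injEq] at h
          have hlen : ts.length = 1 := by rw [h.2]; rfl
          have : i = j := by omega
          subst this; rfl
end

section
/- Let N be an NFA with ε-transitions (possibly containing ε-cycles), with the degree of ambiguity counted via short accepting runs. Then N is either polynomially ambiguous or exponentially ambiguous; that is, if there is no polynomial h such that da(N,w) ≤ h(|w|) for all w ∈ Σ*, then the function g(n) = max{da(N,w) : w ∈ Σ*, |w| ≤ n} is in 2^{Ω(n)}. -/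
/-! ## Runs with labels, short runs, and the degree of ambiguity -/

/-- `LRun N q w ps bs`: `ps` is the state sequence and `bs` the label sequence of a run
of the ε-NFA `N` starting in `q` and reading exactly `w` (`none` is the label ε). -/
inductive LRun {A Q : Type} (N : ENFA A Q) : Q → List A → List Q → List (Option A) → Prop
  | last (q : Q) : LRun N q [] [q] []
  | eps {p q : Q} {w : List A} {ps : List Q} {bs : List (Option A)} :
      q ∈ N.tr p none → LRun N q w ps bs → LRun N p w (p :: ps) (none :: bs)
  | sym {p q : Q} {a : A} {w : List A} {ps : List Q} {bs : List (Option A)} :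
      q ∈ N.tr p (some a) → LRun N q w ps bs → LRun N p (a :: w) (p :: ps) (some a :: bs)

/-- A run (given by its state sequence `ps` and label sequence `bs`) is *short* if it
contains no ε-cycle repeating an ε-transition: there are no `i < j` with
`bs i = … = bs j = ε`, `ps i = ps j` and `ps (i+1) = ps (j+1)`. -/
def ShortRun {A Q : Type} (ps : List Q) (bs : List (Option A)) : Prop :=
  ¬ ∃ i j : ℕ, i < j ∧ j < bs.length ∧
      (∀ l : ℕ, i ≤ l → l ≤ j → bs[l]? = some none) ∧
      ps[i]? = ps[j]? ∧ ps[i + 1]? = ps[j + 1]?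

/-- The degree of ambiguity `da(N, w)`: the number of short accepting runs of `N` on `w`. -/
noncomputable def da {A Q : Type} (N : ENFA A Q) (w : List A) : ℕ :=
  Nat.card {p : List Q × List (Option A) //
    LRun N N.init w p.1 p.2 ∧ (∃ q ∈ N.F, p.1.getLast? = some q) ∧ ShortRun p.1 p.2}

/-! ### Auxiliary development for statement17 -/

namespace S17

open Classical

variable {A Q : Type}

theorem lrun_length {N : ENFA A Q} {q : Q} {w : List A} {ps : List Q}
    {bs : List (Option A)} (h : LRun N q w ps bs) : ps.length = bs.length + 1 := by
  induction h with
  | last q => simp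
  | eps _ _ ih => simp [ih]
  | sym _ _ ih => simp [ih]

theorem lrun_head {N : ENFA A Q} {q : Q} {w : List A} {ps : List Q}
    {bs : List (Option A)} (h : LRun N q w ps bs) : ps.head? = some q := by
  cases h <;> rfl

theorem lrun_ne_nil {N : ENFA A Q} {q : Q} {w : List A} {ps : List Q}
    {bs : List (Option A)} (h : LRun N q w ps bs) : ps ≠ [] := by
  cases h <;> simp

theorem lrun_word {N : ENFA A Q} {q : Q} {w : List A} {ps : List Q}
    {bs : List (Option A)} (h : LRun N q w ps bs) : bs.filterMap id = w := by
  induction h with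
  | last q => rfl
  | eps _ _ ih => simpa using ih
  | sym _ _ ih => simpa using ih

theorem eps_all_none {N : ENFA A Q} {q : Q} {ps : List Q} {bs : List (Option A)}
    (h : LRun N q [] ps bs) : ∀ x ∈ bs, x = none := by
  have hw := lrun_word h
  intro x hx
  cases x with
  | none => rfl
  | some a =>
    have : a ∈ bs.filterMap id := List.mem_filterMap.mpr ⟨some a, hx, rfl⟩
    rw [hw] at this
    simp at this

theorem shortRun_append_left {ps₁ ps₂ : List Q} {bs₁ bs₂ : List (Option A)}
    (hl : ps₁.length = bs₁.length + 1) (h : ShortRun (ps₁ ++ ps₂) (bs₁ ++ bs₂)) :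
    ShortRun ps₁ bs₁ := by
  rintro ⟨i, j, hij, hj, hlab, hp1, hp2⟩
  apply h
  refine ⟨i, j, hij, by rw [List.length_append]; omega, fun l hil hlj => ?_, ?_, ?_⟩
  · rw [List.getElem?_append_left (by omega : l < bs₁.length)]
    exact hlab l hil hlj
  · rw [List.getElem?_append_left (by omega : i < ps₁.length),
      List.getElem?_append_left (by omega : j < ps₁.length)]
    exact hp1
  · rw [List.getElem?_append_left (show i + 1 < ps₁.length by omega),
      List.getElem?_append_left (show j + 1 < ps₁.length by omega)]
    exact hp2

theorem shortRun_append_right {ps₁ ps₂ : List Q} {a : A} {bs₁ bs₂ : List (Option A)}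
    (hl : ps₁.length = bs₁.length + 1)
    (h : ShortRun (ps₁ ++ ps₂) (bs₁ ++ some a :: bs₂)) :
    ShortRun ps₂ bs₂ := by
  rintro ⟨i, j, hij, hj, hlab, hp1, hp2⟩
  set L := bs₁.length with hL
  apply h
  have e1 : ∀ k : ℕ, (bs₁ ++ some a :: bs₂)[k + (L + 1)]? = bs₂[k]? := by
    intro k
    rw [List.getElem?_append_right (by omega : bs₁.length ≤ k + (L + 1))]
    have : k + (L + 1) - bs₁.length = k + 1 := by omega
    rw [this]
    rfl
  have e2 : ∀ k : ℕ, (ps₁ ++ ps₂)[k + (L + 1)]? = ps₂[k]? := by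
    intro k
    rw [List.getElem?_append_right (by omega : ps₁.length ≤ k + (L + 1))]
    congr 1
    omega
  refine ⟨i + (L + 1), j + (L + 1), by omega, by rw [List.length_append]; simp; omega,
    fun l hil hlj => ?_, ?_, ?_⟩
  · have hl1 : L + 1 ≤ l := by omega
    have : l = (l - (L + 1)) + (L + 1) := by omega
    rw [this, e1]
    exact hlab _ (by omega) (by omega)
  · rw [e2, e2]; exact hp1
  · have : ∀ k : ℕ, k + (L + 1) + 1 = (k + 1) + (L + 1) := by omega
    rw [this, this, e2, e2]; exact hp2

theorem shortRun_combine {ps₁ ps₂ : List Q} {a : A} {bs₁ bs₂ : List (Option A)}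
    (hl : ps₁.length = bs₁.length + 1) (hnone : ∀ x ∈ bs₁, x = none)
    (h₁ : ShortRun ps₁ bs₁) (h₂ : ShortRun ps₂ bs₂) :
    ShortRun (ps₁ ++ ps₂) (bs₁ ++ some a :: bs₂) := by
  rintro ⟨i, j, hij, hj, hlab, hp1, hp2⟩
  set L := bs₁.length with hL
  have hjlen : j < L + 1 + bs₂.length := by
    rw [List.length_append, List.length_cons] at hj; omega
  by_cases hc1 : j < L
  · apply h₁
    refine ⟨i, j, hij, by omega, fun l hil hlj => ?_, ?_, ?_⟩
    · have := hlab l hil hlj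
      rwa [List.getElem?_append_left (by omega : l < bs₁.length)] at this
    · have := hp1
      rwa [List.getElem?_append_left (by omega : i < ps₁.length),
        List.getElem?_append_left (by omega : j < ps₁.length)] at this
    · have := hp2
      rwa [List.getElem?_append_left (show i + 1 < ps₁.length by omega),
        List.getElem?_append_left (show j + 1 < ps₁.length by omega)] at this
  · by_cases hc2 : L < i
    · apply h₂
      have e1 : ∀ k : ℕ, (bs₁ ++ some a :: bs₂)[k + (L + 1)]? = bs₂[k]? := by
        intro k
        rw [List.getElem?_append_right (by omega : bs₁.length ≤ k + (L + 1))]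
        have : k + (L + 1) - bs₁.length = k + 1 := by omega
        rw [this]
        rfl
      have e2 : ∀ k : ℕ, (ps₁ ++ ps₂)[k + (L + 1)]? = ps₂[k]? := by
        intro k
        rw [List.getElem?_append_right (by omega : ps₁.length ≤ k + (L + 1))]
        congr 1
        omega
      refine ⟨i - (L + 1), j - (L + 1), by omega, by omega, fun l hil hlj => ?_, ?_, ?_⟩
      · have := hlab (l + (L + 1)) (by omega) (by omega)
        rwa [e1] at this
      · have := hp1
        have ei : i = (i - (L + 1)) + (L + 1) := by omega
        have ej : j = (j - (L + 1)) + (L + 1) := by omega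
        rw [ei, ej, e2, e2] at this
        exact this
      · have := hp2
        have ei : i + 1 = (i - (L + 1) + 1) + (L + 1) := by omega
        have ej : j + 1 = (j - (L + 1) + 1) + (L + 1) := by omega
        rw [ei, ej, e2, e2] at this
        exact this
    · -- i ≤ L ≤ j : the label at position L is `some a`, contradiction
      have := hlab L (by omega) (by omega)
      rw [List.getElem?_append_right (by omega : bs₁.length ≤ L)] at this
      have hLL : L - bs₁.length = 0 := by omega
      rw [hLL] at this
      simp at this

end S17

namespace S17

open Classical

variable {A Q : Type}

/-- Short ε-runs from `q` to `s`. -/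
def Eps (N : ENFA A Q) (q s : Q) : Type :=
  {p : List Q × List (Option A) //
    LRun N q [] p.1 p.2 ∧ p.1.getLast? = some s ∧ ShortRun p.1 p.2}

/-- Short accepting runs from `q` on `w`. -/
def Runs (N : ENFA A Q) (q : Q) (w : List A) : Type :=
  {p : List Q × List (Option A) //
    LRun N q w p.1 p.2 ∧ (∃ f ∈ N.F, p.1.getLast? = some f) ∧ ShortRun p.1 p.2}

variable [Fintype A] [Fintype Q]

theorem eps_length_le {N : ENFA A Q} {q : Q} {ps : List Q} {bs : List (Option A)}
    (h : LRun N q [] ps bs) (hs : ShortRun ps bs) :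
    ps.length ≤ Fintype.card Q * Fintype.card Q + 1 := by
  by_contra hlen
  push_neg at hlen
  have hlb : ps.length = bs.length + 1 := lrun_length h
  set K := Fintype.card Q * Fintype.card Q with hK
  have hcard : Fintype.card (Q × Q) < Fintype.card (Fin (K + 1)) := by
    simp [hK]
  obtain ⟨i, j, hne, hfeq⟩ := Fintype.exists_ne_map_eq_of_card_lt
    (fun i : Fin (K + 1) =>
      ((ps.get ⟨(i : ℕ), by have := i.isLt; omega⟩ : Q),
        (ps.get ⟨(i : ℕ) + 1, by have := i.isLt; omega⟩ : Q))) hcard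
  have h1 := congrArg Prod.fst hfeq
  have h2 := congrArg Prod.snd hfeq
  simp only at h1 h2
  have key : ∀ i j : Fin (K + 1), (i : ℕ) < (j : ℕ) →
      (ps.get ⟨(i : ℕ), by have := i.isLt; omega⟩ : Q) =
        ps.get ⟨(j : ℕ), by have := j.isLt; omega⟩ →
      (ps.get ⟨(i : ℕ) + 1, by have := i.isLt; omega⟩ : Q) =
        ps.get ⟨(j : ℕ) + 1, by have := j.isLt; omega⟩ → False := by
    intro i j hij e1 e2
    have hi := i.isLt
    have hj := j.isLt
    apply hs
    refine ⟨i, j, hij, by omega, fun l hil hlj => ?_, ?_, ?_⟩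
    · rw [List.getElem?_eq_getElem (by omega : l < bs.length)]
      exact congrArg some (eps_all_none h _ (List.getElem_mem (by omega : l < bs.length)))
    · rw [List.getElem?_eq_getElem (by omega : (i : ℕ) < ps.length),
        List.getElem?_eq_getElem (by omega : (j : ℕ) < ps.length)]
      exact congrArg some e1
    · rw [List.getElem?_eq_getElem (by omega : (i : ℕ) + 1 < ps.length),
        List.getElem?_eq_getElem (by omega : (j : ℕ) + 1 < ps.length)]
      exact congrArg some e2
  have hv : (i : ℕ) ≠ (j : ℕ) := fun hv => hne (Fin.ext hv)
  rcases hv.lt_or_gt with hij | hij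
  · exact key i j hij h1 h2
  · exact key j i hij h1.symm h2.symm

instance eps_finite (N : ENFA A Q) (q s : Q) : Finite (Eps N q s) := by
  set K := Fintype.card Q * Fintype.card Q + 1 with hK
  have hfin : ({p : List Q × List (Option A) |
      p.1.length ≤ K ∧ p.2.length ≤ K} : Set (List Q × List (Option A))).Finite := by
    apply Set.Finite.subset ((List.finite_length_le Q K).prod
      (List.finite_length_le (Option A) K))
    rintro ⟨l1, l2⟩ ⟨h1, h2⟩
    exact ⟨h1, h2⟩
  have : ({p : List Q × List (Option A) |
      LRun N q [] p.1 p.2 ∧ p.1.getLast? = some s ∧ ShortRun p.1 p.2}).Finite := by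
    apply hfin.subset
    rintro ⟨ps, bs⟩ ⟨h1, _, h3⟩
    have hle := eps_length_le h1 h3
    have hlb := lrun_length h1
    exact ⟨hle, by omega⟩
  exact this.to_subtype

/-- Number of short ε-runs from `q` to `s`. -/
noncomputable def EE (N : ENFA A Q) (q s : Q) : ℕ := Nat.card (Eps N q s)

/-- Number of short accepting runs from `q` on `w`. -/
noncomputable def RR (N : ENFA A Q) (q : Q) (w : List A) : ℕ := Nat.card (Runs N q w)

noncomputable def vF (N : ENFA A Q) (q : Q) : ℕ :=
  ∑ s : Q, if s ∈ N.F then EE N q s else 0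

noncomputable def cc (N : ENFA A Q) (q : Q) (a : A) (t : Q) : ℕ :=
  ∑ s : Q, EE N q s * (if t ∈ N.tr s (some a) then 1 else 0)

theorem nat_card_sigma {ι : Type} [Fintype ι] (f : ι → Type) [∀ i, Finite (f i)] :
    Nat.card (Σ i, f i) = ∑ i, Nat.card (f i) := by
  letI : ∀ i, Fintype (f i) := fun i => Fintype.ofFinite _
  rw [Nat.card_eq_fintype_card, Fintype.card_sigma]
  exact Finset.sum_congr rfl fun i _ => (Nat.card_eq_fintype_card).symm

theorem nat_card_plift (p : Prop) : Nat.card (PLift p) = if p then 1 else 0 := by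
  by_cases hp : p
  · rw [if_pos hp]
    haveI : Nonempty (PLift p) := ⟨⟨hp⟩⟩
    exact Nat.card_unique
  · rw [if_neg hp]
    exact @Nat.card_of_isEmpty _ ⟨fun a => hp a.down⟩

/-- The combination map in the `[]` case. -/
def combineNil (N : ENFA A Q) (q : Q)
    (x : Σ s : Q, Eps N q s × PLift (s ∈ N.F)) : Runs N q [] :=
  ⟨x.2.1.1, x.2.1.2.1, ⟨x.1, x.2.2.down, x.2.1.2.2.1⟩, x.2.1.2.2.2⟩

theorem combineNil_bijective (N : ENFA A Q) (q : Q) :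
    Function.Bijective (combineNil N q) := by
  constructor
  · rintro ⟨s, e, hs⟩ ⟨s', e', hs'⟩ hx
    have hv : e.1 = e'.1 := congrArg Subtype.val hx
    have hss : s = s' := by
      have := e.2.2.1.symm.trans (hv ▸ e'.2.2.1)
      exact Option.some_injective _ this
    subst hss
    have he : e = e' := Subtype.ext hv
    subst he
    have : hs = hs' := Subsingleton.elim _ _
    rw [this]
  · rintro ⟨p, h1, ⟨f, hf, hlast⟩, h3⟩
    exact ⟨⟨f, ⟨p, h1, hlast, h3⟩, ⟨hf⟩⟩, rfl⟩

theorem RR_nil (N : ENFA A Q) (q : Q) : RR N q [] = vF N q := by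
  have := Nat.card_eq_of_bijective _ (combineNil_bijective N q)
  rw [RR, ← this, nat_card_sigma, vF]
  refine Finset.sum_congr rfl fun s _ => ?_
  rw [Nat.card_prod, nat_card_plift]
  by_cases hs : s ∈ N.F <;> simp [hs, EE]

instance runs_nil_finite (N : ENFA A Q) (q : Q) : Finite (Runs N q []) :=
  Finite.of_surjective _ (combineNil_bijective N q).surjective

end S17

namespace S17

open Classical

variable {A Q : Type}

theorem lrun_glue_aux {N : ENFA A Q} {q : Q} {w₀ : List A} {ps₁ : List Q}
    {bs₁ : List (Option A)} (h₁ : LRun N q w₀ ps₁ bs₁) :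
    ∀ {s t : Q} {a : A} {w : List A} {ps₂ : List Q} {bs₂ : List (Option A)},
      w₀ = [] → ps₁.getLast? = some s → t ∈ N.tr s (some a) → LRun N t w ps₂ bs₂ →
      LRun N q (a :: w) (ps₁ ++ ps₂) (bs₁ ++ some a :: bs₂) := by
  induction h₁ with
  | last p =>
    intro s t a w ps₂ bs₂ _ hlast ht h₂
    have hp : p = s := by simpa using hlast
    subst hp
    simpa using LRun.sym ht h₂
  | eps hq hrun ih =>
    rename_i p q' w' ps bs
    intro s t a w ps₂ bs₂ hw hlast ht h₂
    have hne := lrun_ne_nil hrun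
    have hlast' : ps.getLast? = some s := by
      cases ps with
      | nil => exact absurd rfl hne
      | cons x xs => rwa [List.getLast?_cons_cons] at hlast
    exact LRun.eps hq (ih hw hlast' ht h₂)
  | sym hq hrun ih =>
    intro s t a w ps₂ bs₂ hw
    exact absurd hw (by simp)

theorem lrun_glue {N : ENFA A Q} {q s t : Q} {a : A} {w : List A}
    {ps₁ : List Q} {bs₁ : List (Option A)} {ps₂ : List Q} {bs₂ : List (Option A)}
    (h₁ : LRun N q [] ps₁ bs₁) (hlast : ps₁.getLast? = some s)
    (ht : t ∈ N.tr s (some a)) (h₂ : LRun N t w ps₂ bs₂) :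
    LRun N q (a :: w) (ps₁ ++ ps₂) (bs₁ ++ some a :: bs₂) :=
  lrun_glue_aux h₁ rfl hlast ht h₂

theorem lrun_decompose {N : ENFA A Q} {q : Q} {w' : List A} {ps : List Q}
    {bs : List (Option A)} (h : LRun N q w' ps bs) :
    ∀ {a : A} {w : List A}, w' = a :: w →
      ∃ ps₁ bs₁ s t ps₂ bs₂,
        ps = ps₁ ++ ps₂ ∧ bs = bs₁ ++ some a :: bs₂ ∧
        LRun N q [] ps₁ bs₁ ∧ ps₁.getLast? = some s ∧
        t ∈ N.tr s (some a) ∧ LRun N t w ps₂ bs₂ := by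
  induction h with
  | last p => intro a w hw; exact absurd hw (by simp)
  | eps hq hrun ih =>
    rename_i p q' wa psa bsa
    intro a w hw
    obtain ⟨ps₁, bs₁, s, t, ps₂, bs₂, h1, h2, h3, h4, h5, h6⟩ := ih hw
    refine ⟨p :: ps₁, none :: bs₁, s, t, ps₂, bs₂, by rw [h1]; rfl, by rw [h2]; rfl,
      LRun.eps hq h3, ?_, h5, h6⟩
    have hne := lrun_ne_nil h3
    cases ps₁ with
    | nil => exact absurd rfl hne
    | cons x xs => rwa [List.getLast?_cons_cons]
  | sym hq hrun ih =>
    rename_i p q' a' wa psa bsa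
    intro a w hw
    cases hw
    exact ⟨[p], [], p, q', psa, bsa, rfl, rfl, LRun.last p, rfl, hq, hrun⟩

/-- The combination map in the cons case. -/
def combineCons (N : ENFA A Q) (q : Q) (a : A) (w : List A)
    (x : Σ s t : Q, Eps N q s × PLift (t ∈ N.tr s (some a)) × Runs N t w) :
    Runs N q (a :: w) := by
  obtain ⟨s, t, e, ht, r⟩ := x
  refine ⟨(e.1.1 ++ r.1.1, e.1.2 ++ some a :: r.1.2),
    lrun_glue e.2.1 e.2.2.1 ht.down r.2.1, ?_, ?_⟩
  · obtain ⟨f, hf, hlast⟩ := r.2.2.1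
    exact ⟨f, hf, by rw [List.getLast?_append_of_ne_nil _ (lrun_ne_nil r.2.1)]; exact hlast⟩
  · exact shortRun_combine (lrun_length e.2.1) (eps_all_none e.2.1) e.2.2.2 r.2.2.2

theorem allnone_append_inj {bs₁ bs₁' bs₂ bs₂' : List (Option A)} {a a' : A}
    (h1 : ∀ x ∈ bs₁, x = none) (h1' : ∀ x ∈ bs₁', x = none)
    (heq : bs₁ ++ some a :: bs₂ = bs₁' ++ some a' :: bs₂') :
    bs₁ = bs₁' ∧ some a :: bs₂ = some a' :: bs₂' := by
  have hlen : bs₁.length = bs₁'.length := by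
    by_contra hne
    rcases Nat.lt_or_ge bs₁.length bs₁'.length with hlt | hge
    · have e1 : (bs₁ ++ some a :: bs₂)[bs₁.length]? = some (some a) := by
        rw [List.getElem?_append_right (le_refl _)]
        simp
      have e2 : (bs₁' ++ some a' :: bs₂')[bs₁.length]? = some none := by
        rw [List.getElem?_append_left hlt, List.getElem?_eq_getElem hlt]
        exact congrArg some (h1' _ (List.getElem_mem hlt))
      rw [heq, e2] at e1
      simp at e1
    · have hlt : bs₁'.length < bs₁.length := by omega
      have e1 : (bs₁' ++ some a' :: bs₂')[bs₁'.length]? = some (some a') := by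
        rw [List.getElem?_append_right (le_refl _)]
        simp
      have e2 : (bs₁ ++ some a :: bs₂)[bs₁'.length]? = some none := by
        rw [List.getElem?_append_left hlt, List.getElem?_eq_getElem hlt]
        exact congrArg some (h1 _ (List.getElem_mem hlt))
      rw [heq, e1] at e2
      simp at e2
  exact List.append_inj heq hlen

variable [Fintype A] [Fintype Q]

theorem combineCons_bijective (N : ENFA A Q) (q : Q) (a : A) (w : List A) :
    Function.Bijective (combineCons N q a w) := by
  constructor
  · rintro ⟨s, t, e, ht, r⟩ ⟨s', t', e', ht', r'⟩ hx
    have hv : (e.1.1 ++ r.1.1, e.1.2 ++ some a :: r.1.2)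
        = (e'.1.1 ++ r'.1.1, e'.1.2 ++ some a :: r'.1.2) := congrArg Subtype.val hx
    have hbs := congrArg Prod.snd hv
    have hps := congrArg Prod.fst hv
    simp only at hbs hps
    obtain ⟨hb1, hb2⟩ := allnone_append_inj (eps_all_none e.2.1) (eps_all_none e'.2.1) hbs
    have hb2' : r.1.2 = r'.1.2 := by injection hb2
    have hplen : e.1.1.length = e'.1.1.length := by
      rw [lrun_length e.2.1, lrun_length e'.2.1, hb1]
    obtain ⟨hp1, hp2⟩ := List.append_inj hps hplen
    have hss : s = s' := by
      have := e.2.2.1.symm.trans (hp1 ▸ e'.2.2.1)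
      exact Option.some_injective _ this
    subst hss
    have htt : t = t' := by
      have h1 := lrun_head r.2.1
      have h2 := lrun_head r'.2.1
      rw [hp2] at h1
      exact Option.some_injective _ (h1.symm.trans h2)
    subst htt
    have he : e = e' := Subtype.ext (Prod.ext hp1 hb1)
    have hr : r = r' := Subtype.ext (Prod.ext hp2 hb2')
    subst he; subst hr
    have : ht = ht' := Subsingleton.elim _ _
    rw [this]
  · rintro ⟨⟨ps, bs⟩, hrun, hacc, hshort⟩
    obtain ⟨ps₁, bs₁, s, t, ps₂, bs₂, hps, hbs, h3, h4, h5, h6⟩ := lrun_decompose hrun rfl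
    subst hps; subst hbs
    have hl1 := lrun_length h3
    have hsl : ShortRun ps₁ bs₁ := shortRun_append_left hl1 hshort
    have hsr : ShortRun ps₂ bs₂ := shortRun_append_right hl1 hshort
    have hacc' : ∃ f ∈ N.F, ps₂.getLast? = some f := by
      obtain ⟨f, hf, hlast⟩ := hacc
      exact ⟨f, hf, by rwa [List.getLast?_append_of_ne_nil _ (lrun_ne_nil h6)] at hlast⟩
    exact ⟨⟨s, t, ⟨(ps₁, bs₁), h3, h4, hsl⟩, ⟨h5⟩, ⟨(ps₂, bs₂), h6, hacc', hsr⟩⟩, rfl⟩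

instance runs_finite (N : ENFA A Q) (w : List A) : ∀ q, Finite (Runs N q w) := by
  induction w with
  | nil => intro q; infer_instance
  | cons a w ih =>
    intro q
    haveI : ∀ t, Finite (Runs N t w) := ih
    exact Finite.of_surjective _ (combineCons_bijective N q a w).surjective

theorem RR_cons (N : ENFA A Q) (q : Q) (a : A) (w : List A) :
    RR N q (a :: w) = ∑ t : Q, cc N q a t * RR N t w := by
  have hbij := Nat.card_eq_of_bijective _ (combineCons_bijective N q a w)
  rw [RR, ← hbij, nat_card_sigma]
  have : ∀ s : Q,
      Nat.card (Σ t : Q, Eps N q s × PLift (t ∈ N.tr s (some a)) × Runs N t w)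
        = ∑ t : Q, EE N q s * ((if t ∈ N.tr s (some a) then 1 else 0) * RR N t w) := by
    intro s
    rw [nat_card_sigma]
    refine Finset.sum_congr rfl fun t _ => ?_
    rw [Nat.card_prod, Nat.card_prod, nat_card_plift]
    rfl
  rw [Finset.sum_congr rfl fun s _ => this s, Finset.sum_comm]
  refine Finset.sum_congr rfl fun t _ => ?_
  rw [cc, Finset.sum_mul]
  exact Finset.sum_congr rfl fun s _ => by ring

theorem da_eq_RR (N : ENFA A Q) (w : List A) : da N w = RR N N.init w := rfl

end S17

namespace S17

open scoped Classical

variable {A Q : Type} [Fintype Q]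

/-- Weighted path counting: `PP c w p q` = number of decorated paths from `p` to `q`
reading `w`, where `c` gives edge multiplicities. -/
noncomputable def PP (c : Q → A → Q → ℕ) : List A → Q → Q → ℕ
  | [] => fun p q => if p = q then 1 else 0
  | a :: w => fun p q => ∑ t : Q, c p a t * PP c w t q

/-- Paths avoiding the state `s` everywhere. -/
noncomputable def noS (c : Q → A → Q → ℕ) (s : Q) : List A → Q → Q → ℕ
  | [] => fun p q => if p = s then 0 else if p = q then 1 else 0
  | a :: w => fun p q => if p = s then 0 else ∑ t : Q, c p a t * noS c s w t q

/-- `AA c s i w p` = number of paths from `p` on `w.take i` hitting `s` for the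
first time at time `i`. -/
noncomputable def AA (c : Q → A → Q → ℕ) (s : Q) : ℕ → List A → Q → ℕ
  | 0 => fun _ p => if p = s then 1 else 0
  | i + 1 => fun w p =>
    match w with
    | [] => 0
    | a :: w => if p = s then 0 else ∑ t : Q, c p a t * AA c s i w t

/-- Edges of `c` with an endpoint at `s` deleted. -/
noncomputable def ban (c : Q → A → Q → ℕ) (s : Q) : Q → A → Q → ℕ :=
  fun x a y => if x = s ∨ y = s then 0 else c x a y

theorem ban_le (c : Q → A → Q → ℕ) (s : Q) : ∀ x a y, ban c s x a y ≤ c x a y := by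
  intro x a y
  unfold ban
  split <;> omega

theorem PP_mono {c₁ c₂ : Q → A → Q → ℕ} (h : ∀ x a y, c₁ x a y ≤ c₂ x a y) :
    ∀ (w : List A) (p q : Q), PP c₁ w p q ≤ PP c₂ w p q := by
  intro w
  induction w with
  | nil => intro p q; simp [PP]
  | cons a w ih =>
    intro p q
    simp only [PP]
    exact Finset.sum_le_sum fun t _ => Nat.mul_le_mul (h p a t) (ih t q)

theorem PP_append (c : Q → A → Q → ℕ) (u x : List A) :
    ∀ p q, PP c (u ++ x) p q = ∑ t : Q, PP c u p t * PP c x t q := by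
  induction u with
  | nil =>
    intro p q
    simp [PP, ite_mul]
  | cons a u ih =>
    intro p q
    have hsh : (a :: u) ++ x = a :: (u ++ x) := rfl
    rw [hsh]
    simp only [PP]
    rw [Finset.sum_congr rfl fun t (_ : t ∈ Finset.univ) => by rw [ih t q, Finset.mul_sum]]
    rw [Finset.sum_comm]
    refine Finset.sum_congr rfl fun t _ => ?_
    rw [Finset.sum_mul]
    exact Finset.sum_congr rfl fun u' _ => by ring

theorem PP_reverse (c : Q → A → Q → ℕ) :
    ∀ (w : List A) (p q : Q), PP c w p q = PP (fun x a y => c y a x) w.reverse q p := by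
  intro w
  induction w with
  | nil => intro p q; simp [PP, eq_comm]
  | cons a w ih =>
    intro p q
    rw [List.reverse_cons, PP_append]
    simp only [PP, mul_ite, mul_one, mul_zero]
    simp only [Finset.sum_ite_eq', Finset.mem_univ, if_true]
    exact Finset.sum_congr rfl fun t _ => by rw [ih t q]; ring

end S17

namespace S17

open scoped Classical

variable {A Q : Type} [Fintype Q]

theorem noS_self (c : Q → A → Q → ℕ) (s : Q) (w : List A) (q : Q) :
    noS c s w s q = 0 := by
  cases w <;> simp [noS]

theorem noS_le_ban (c : Q → A → Q → ℕ) (s : Q) :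
    ∀ (w : List A) (p q : Q), noS c s w p q ≤ PP (ban c s) w p q := by
  intro w
  induction w with
  | nil =>
    intro p q
    simp only [noS, PP]
    split <;> simp
  | cons a w ih =>
    intro p q
    simp only [noS, PP]
    split
    · exact Nat.zero_le _
    · rename_i hp
      refine Finset.sum_le_sum fun t _ => ?_
      by_cases ht : t = s
      · subst ht
        rw [noS_self]
        simp
      · have hba : ban c s p a t = c p a t := by
          simp [ban, hp, ht]
        rw [hba]
        exact Nat.mul_le_mul_left _ (ih t q)

theorem renewal (c : Q → A → Q → ℕ) (s : Q) :
    ∀ (w : List A) (p q : Q),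
      PP c w p q = noS c s w p q +
        ∑ i ∈ Finset.range (w.length + 1), AA c s i w p * PP c (w.drop i) s q := by
  intro w
  induction w with
  | nil =>
    intro p q
    simp only [PP, noS, AA, List.length_nil, List.drop_nil]
    rw [Finset.sum_range_one]
    simp only [AA]
    by_cases hp : p = s
    · subst hp
      simp [PP]
    · simp [hp]
  | cons a w ih =>
    intro p q
    by_cases hp : p = s
    · have hlhs : noS c s (a :: w) p q = 0 := by rw [hp]; exact noS_self c s _ q
      rw [hlhs, Nat.zero_add]
      simp only [List.length_cons]
      rw [Finset.sum_range_succ']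
      have h0 : AA c s 0 (a :: w) p * PP c ((a :: w).drop 0) s q = PP c (a :: w) s q := by
        simp [AA, hp]
      have hrest : ∀ i ∈ Finset.range (w.length + 1),
          AA c s (i + 1) (a :: w) p * PP c ((a :: w).drop (i + 1)) s q = 0 := by
        intro i _
        simp [AA, hp]
      rw [Finset.sum_congr rfl hrest, h0]
      simp [hp]
    · have hPP : PP c (a :: w) p q = ∑ t : Q, c p a t * PP c w t q := rfl
      rw [hPP]
      rw [Finset.sum_congr rfl fun t (_ : t ∈ Finset.univ) => by rw [ih t q]]
      have hsplit : ∀ t : Q, c p a t * (noS c s w t q +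
          ∑ i ∈ Finset.range (w.length + 1), AA c s i w t * PP c (w.drop i) s q)
          = c p a t * noS c s w t q +
            ∑ i ∈ Finset.range (w.length + 1),
              c p a t * (AA c s i w t * PP c (w.drop i) s q) := by
        intro t
        rw [Nat.mul_add, Finset.mul_sum]
      rw [Finset.sum_congr rfl fun t _ => hsplit t, Finset.sum_add_distrib]
      have h1 : (∑ t : Q, c p a t * noS c s w t q) = noS c s (a :: w) p q := by
        simp [noS, hp]
      have h2 : (∑ i ∈ Finset.range ((a :: w).length + 1),
              AA c s i (a :: w) p * PP c ((a :: w).drop i) s q)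
          = ∑ t : Q, ∑ i ∈ Finset.range (w.length + 1),
              c p a t * (AA c s i w t * PP c (w.drop i) s q) := by
        rw [List.length_cons, Finset.sum_range_succ']
        have h0 : AA c s 0 (a :: w) p * PP c ((a :: w).drop 0) s q = 0 := by
          simp [AA, hp]
        rw [h0, Nat.add_zero]
        have hterm : ∀ i ∈ Finset.range (w.length + 1),
            AA c s (i + 1) (a :: w) p * PP c ((a :: w).drop (i + 1)) s q
              = ∑ t : Q, c p a t * (AA c s i w t * PP c (w.drop i) s q) := by
          intro i _
          have hAA : AA c s (i + 1) (a :: w) p = ∑ t : Q, c p a t * AA c s i w t := by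
            simp [AA, hp]
          have hd : (a :: w).drop (i + 1) = w.drop i := rfl
          rw [hd, hAA, Finset.sum_mul]
          exact Finset.sum_congr rfl fun t _ => by ring
        rw [Finset.sum_congr rfl hterm]
        exact Finset.sum_comm
      rw [h1, h2]

theorem AA_zero_le (c : Q → A → Q → ℕ) (s : Q) (w : List A) (p : Q) :
    AA c s 0 w p ≤ 1 := by
  simp only [AA]
  split <;> omega

theorem AA_bound {b : ℕ} {c : Q → A → Q → ℕ} (hb : ∀ x a y, c x a y ≤ b) (s : Q) :
    ∀ (w : List A) (i : ℕ) (p : Q),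
      AA c s (i + 1) w p ≤ b * ∑ u : Q, noS c s (w.take i) p u := by
  intro w
  induction w with
  | nil => intro i p; simp [AA]
  | cons a w ih =>
    intro i p
    by_cases hp : p = s
    · subst hp
      simp [AA]
    · cases i with
      | zero =>
        have hAA : AA c s 1 (a :: w) p = ∑ t : Q, c p a t * AA c s 0 w t := by
          simp [AA, hp]
        rw [hAA]
        have : (∑ t : Q, c p a t * AA c s 0 w t) = c p a s := by
          rw [Finset.sum_congr rfl fun t (_ : t ∈ Finset.univ) => by
            simp only [AA]
            rw [mul_ite, mul_one, mul_zero]]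
          simp
        rw [this]
        have hsum : (∑ u : Q, noS c s (List.take 0 (a :: w)) p u) = 1 := by
          simp only [List.take_zero, noS, hp, if_false]
          simp
        rw [hsum, Nat.mul_one]
        exact hb p a s
      | succ i =>
        have hAA : AA c s (i + 2) (a :: w) p = ∑ t : Q, c p a t * AA c s (i + 1) w t := by
          simp [AA, hp]
        rw [hAA]
        have htake : List.take (i + 1) (a :: w) = a :: List.take i w := rfl
        rw [htake]
        have hnoS : ∀ u : Q, noS c s (a :: List.take i w) p u
            = ∑ t : Q, c p a t * noS c s (List.take i w) t u := by
          intro u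
          simp [noS, hp]
        calc (∑ t : Q, c p a t * AA c s (i + 1) w t)
            ≤ ∑ t : Q, c p a t * (b * ∑ u : Q, noS c s (List.take i w) t u) :=
              Finset.sum_le_sum fun t _ => Nat.mul_le_mul_left _ (ih i t)
          _ = b * ∑ u : Q, ∑ t : Q, c p a t * noS c s (List.take i w) t u := by
              simp only [Finset.mul_sum]
              rw [Finset.sum_comm]
              exact Finset.sum_congr rfl fun u _ =>
                Finset.sum_congr rfl fun t _ => by ring
          _ = b * ∑ u : Q, noS c s (a :: List.take i w) p u := by
              rw [Finset.sum_congr rfl fun u (_ : u ∈ Finset.univ) => (hnoS u).symm]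

theorem PP_le_one_of_zero {c : Q → A → Q → ℕ} (hc : ∀ x a y, c x a y = 0) :
    ∀ (w : List A) (p q : Q), PP c w p q ≤ 1 := by
  intro w p q
  cases w with
  | nil => simp only [PP]; split <;> omega
  | cons a w => simp [PP, hc]

end S17

namespace S17

open scoped Classical

variable {A Q : Type} [Fintype Q]

noncomputable def pF (b k : ℕ) : ℕ → Polynomial ℕ
  | 0 => 1
  | v + 1 =>
    pF b k v + (Polynomial.X + 1) * (Polynomial.C (b * k) * pF b k v + 1) *
      (pF b k v + (Polynomial.X + 1) * (Polynomial.C (b * k) * pF b k v + 1))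

noncomputable def FF (b k v n : ℕ) : ℕ := (pF b k v).eval n

theorem FF_zero (b k n : ℕ) : FF b k 0 n = 1 := by simp [FF, pF]

theorem FF_succ (b k v n : ℕ) :
    FF b k (v + 1) n = FF b k v n + (n + 1) * (b * k * FF b k v n + 1) *
      (FF b k v n + (n + 1) * (b * k * FF b k v n + 1)) := by
  simp only [FF, pF, Polynomial.eval_add, Polynomial.eval_mul, Polynomial.eval_one,
    Polynomial.eval_X, Polynomial.eval_C]

theorem one_le_FF (b k : ℕ) : ∀ v n, 1 ≤ FF b k v n := by
  intro v n
  induction v with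
  | zero => exact le_of_eq (FF_zero b k n).symm
  | succ v ih => rw [FF_succ]; exact le_trans ih (Nat.le_add_right _ _)

theorem mainBound {b : ℕ} :
    ∀ (v : ℕ) (c : Q → A → Q → ℕ) (V : Finset Q),
      (∀ x a y, c x a y ≤ b) →
      (∀ (s : Q) (y : List A), PP c y s s ≤ 1) →
      (∀ x a y, c x a y ≠ 0 → x ∈ V ∧ y ∈ V) →
      V.card ≤ v →
      ∀ (n : ℕ) (w : List A) (p q : Q), w.length ≤ n →
        PP c w p q ≤ FF b (Fintype.card Q) v n := by
  intro v
  induction v with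
  | zero =>
    intro c V hb hloop hsupp hcard n w p q hw
    have hV : V = ∅ := Finset.card_eq_zero.mp (Nat.le_zero.mp hcard)
    have hc0 : ∀ x a y, c x a y = 0 := by
      intro x a y
      by_contra h0
      have := (hsupp x a y h0).1
      rw [hV] at this
      exact absurd this (Finset.notMem_empty x)
    rw [FF_zero]
    exact PP_le_one_of_zero hc0 w p q
  | succ v ih =>
    intro c V hb hloop hsupp hcard n w p q hw
    by_cases hVe : V = ∅
    · have hc0 : ∀ x a y, c x a y = 0 := by
        intro x a y
        by_contra h0
        have := (hsupp x a y h0).1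
        rw [hVe] at this
        exact absurd this (Finset.notMem_empty x)
      exact le_trans (PP_le_one_of_zero hc0 w p q) (one_le_FF b _ (v + 1) n)
    · obtain ⟨s, hs⟩ := Finset.nonempty_iff_ne_empty.mpr hVe
      set k := Fintype.card Q with hk
      set Fv := FF b k v n with hFv
      have hcard' : (V.erase s).card ≤ v := by
        have h1 := Finset.card_erase_of_mem hs
        have h2 : 1 ≤ V.card := Finset.card_pos.mpr ⟨s, hs⟩
        omega
      have hIH : ∀ c₀ : Q → A → Q → ℕ,
          (∀ x a y, c₀ x a y ≤ b) →
          (∀ (s₁ : Q) (y : List A), PP c₀ y s₁ s₁ ≤ 1) →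
          (∀ x a y, c₀ x a y ≠ 0 → x ∈ V ∧ y ∈ V) →
          ∀ (y : List A) (p₁ q₁ : Q), y.length ≤ n →
            noS c₀ s y p₁ q₁ ≤ Fv ∧ ∀ j, AA c₀ s j y p₁ ≤ b * k * Fv + 1 := by
        intro c₀ hb₀ hloop₀ hsupp₀
        have hbansupp : ∀ x a y, ban c₀ s x a y ≠ 0 →
            x ∈ V.erase s ∧ y ∈ V.erase s := by
          intro x a y h0
          have h1 : ¬(x = s ∨ y = s) := by
            intro hor
            exact h0 (by simp [ban, hor])
          have h2 : c₀ x a y ≠ 0 := by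
            intro hc
            exact h0 (by simp [ban, hc])
          obtain ⟨hxV, hyV⟩ := hsupp₀ x a y h2
          push_neg at h1
          exact ⟨Finset.mem_erase.mpr ⟨h1.1, hxV⟩, Finset.mem_erase.mpr ⟨h1.2, hyV⟩⟩
        have hbanle : ∀ x a y, ban c₀ s x a y ≤ b :=
          fun x a y => le_trans (ban_le c₀ s x a y) (hb₀ x a y)
        have hbanloop : ∀ (s₁ : Q) (y : List A), PP (ban c₀ s) y s₁ s₁ ≤ 1 :=
          fun s₁ y => le_trans (PP_mono (ban_le c₀ s) y s₁ s₁) (hloop₀ s₁ y)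
        have hban : ∀ (y : List A) (p₁ q₁ : Q), y.length ≤ n →
            PP (ban c₀ s) y p₁ q₁ ≤ Fv :=
          fun y p₁ q₁ hy =>
            ih (ban c₀ s) (V.erase s) hbanle hbanloop hbansupp hcard' n y p₁ q₁ hy
        intro y p₁ q₁ hy
        constructor
        · exact le_trans (noS_le_ban c₀ s y p₁ q₁) (hban y p₁ q₁ hy)
        · intro j
          cases j with
          | zero =>
            have := AA_zero_le c₀ s y p₁
            omega
          | succ i =>
            calc AA c₀ s (i + 1) y p₁
                ≤ b * ∑ u : Q, noS c₀ s (y.take i) p₁ u := AA_bound hb₀ s y i p₁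
              _ ≤ b * ∑ _u : Q, Fv := by
                  refine Nat.mul_le_mul_left b (Finset.sum_le_sum fun u _ => ?_)
                  have htl : (y.take i).length ≤ n := by
                    rw [List.length_take]
                    exact le_trans (min_le_right _ _) hy
                  exact le_trans (noS_le_ban c₀ s _ p₁ u) (hban _ p₁ u htl)
              _ = b * k * Fv := by
                  rw [Finset.sum_const, Finset.card_univ, smul_eq_mul, Nat.mul_assoc, hk]
              _ ≤ b * k * Fv + 1 := Nat.le_succ _
      have hbflip : ∀ x (a : A) y, (fun x a y => c y a x) x a y ≤ b :=
        fun x a y => hb y a x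
      have hloopflip : ∀ (s₁ : Q) (y : List A),
          PP (fun x (a : A) y => c y a x) y s₁ s₁ ≤ 1 := by
        intro s₁ y
        rw [PP_reverse (fun x a y => c y a x) y s₁ s₁]
        exact hloop s₁ y.reverse
      have hsuppflip : ∀ x (a : A) y, (fun x a y => c y a x) x a y ≠ 0 →
          x ∈ V ∧ y ∈ V := by
        intro x a y h0
        obtain ⟨h1, h2⟩ := hsupp y a x h0
        exact ⟨h2, h1⟩
      have hT3 : ∀ (u : List A) (q' : Q), u.length ≤ n →
          PP c u s q' ≤ Fv + (n + 1) * (b * k * Fv + 1) := by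
        intro u q' hu
        rw [PP_reverse c u s q']
        rw [renewal (fun x a y => c y a x) s u.reverse q' s]
        obtain ⟨hno, hAAb⟩ := hIH (fun x a y => c y a x) hbflip hloopflip hsuppflip
          u.reverse q' s (by simpa using hu)
        calc noS (fun x a y => c y a x) s u.reverse q' s +
              ∑ i ∈ Finset.range (u.reverse.length + 1),
                AA (fun x a y => c y a x) s i u.reverse q' *
                  PP (fun x a y => c y a x) (u.reverse.drop i) s s
            ≤ Fv + ∑ _i ∈ Finset.range (u.reverse.length + 1), (b * k * Fv + 1) * 1 :=
              Nat.add_le_add hno (Finset.sum_le_sum fun i _ =>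
                Nat.mul_le_mul (hAAb i) (hloopflip s _))
          _ = Fv + (u.reverse.length + 1) * (b * k * Fv + 1) := by
              rw [Finset.sum_const, Finset.card_range, smul_eq_mul, Nat.mul_one]
          _ ≤ Fv + (n + 1) * (b * k * Fv + 1) := by
              have hun : u.reverse.length ≤ n := by simpa using hu
              exact Nat.add_le_add_left (Nat.mul_le_mul_right _ (by omega)) _
      rw [renewal c s w p q]
      obtain ⟨hno, hAAb⟩ := hIH c hb hloop hsupp w p q hw
      calc noS c s w p q +
            ∑ i ∈ Finset.range (w.length + 1), AA c s i w p * PP c (w.drop i) s q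
          ≤ Fv + ∑ _i ∈ Finset.range (w.length + 1),
              (b * k * Fv + 1) * (Fv + (n + 1) * (b * k * Fv + 1)) := by
            refine Nat.add_le_add hno (Finset.sum_le_sum fun i _ => ?_)
            refine Nat.mul_le_mul (hAAb i) (hT3 (w.drop i) q ?_)
            rw [List.length_drop]
            omega
        _ = Fv + (w.length + 1) *
              ((b * k * Fv + 1) * (Fv + (n + 1) * (b * k * Fv + 1))) := by
            rw [Finset.sum_const, Finset.card_range, smul_eq_mul]
        _ ≤ Fv + (n + 1) *
              ((b * k * Fv + 1) * (Fv + (n + 1) * (b * k * Fv + 1))) :=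
            Nat.add_le_add_left (Nat.mul_le_mul_right _ (by omega)) _
        _ = FF b k (v + 1) n := by rw [FF_succ]; ring

end S17

namespace S17

open scoped Classical

variable {A Q : Type} [Fintype A] [Fintype Q]

theorem PP_single (c : Q → A → Q → ℕ) (a : A) (p q : Q) :
    PP c [a] p q = c p a q := by
  simp [PP, mul_ite]

theorem RR_eq (N : ENFA A Q) :
    ∀ (w : List A) (q : Q), RR N q w = ∑ t : Q, PP (cc N) w q t * vF N t := by
  intro w
  induction w with
  | nil =>
    intro q
    rw [RR_nil]
    simp [PP, ite_mul]
  | cons a w ih =>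
    intro q
    rw [RR_cons, Finset.sum_congr rfl fun t (_ : t ∈ Finset.univ) => by rw [ih t]]
    simp only [PP, Finset.mul_sum, Finset.sum_mul]
    rw [Finset.sum_comm]
    exact Finset.sum_congr rfl fun t _ => Finset.sum_congr rfl fun u _ => by ring

theorem da_eq_PP (N : ENFA A Q) (w : List A) :
    da N w = ∑ t : Q, PP (cc N) w N.init t * vF N t := by
  rw [da_eq_RR, RR_eq]

/-- A state is useful if it is reachable from the initial state and co-reachable
from acceptance. -/
def Useful (N : ENFA A Q) (s : Q) : Prop :=
  (∃ y : List A, 0 < PP (cc N) y N.init s) ∧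
    (∃ z : List A, 0 < ∑ t : Q, PP (cc N) z s t * vF N t)

noncomputable def UU (N : ENFA A Q) : Finset Q := Finset.univ.filter (Useful N)

noncomputable def cU (N : ENFA A Q) : Q → A → Q → ℕ :=
  fun x a y => if x ∈ UU N ∧ y ∈ UU N then cc N x a y else 0

theorem cU_le_cc (N : ENFA A Q) : ∀ x a y, cU N x a y ≤ cc N x a y := by
  intro x a y
  unfold cU
  split <;> omega

theorem useful_restrict (N : ENFA A Q) :
    ∀ (w : List A) (s : Q), Useful N s →
      (∑ t : Q, PP (cc N) w s t * vF N t) = ∑ t : Q, PP (cU N) w s t * vF N t := by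
  intro w
  induction w with
  | nil => intro s _; simp [PP]
  | cons a w ih =>
    intro s hs
    have hstep : ∀ c' : Q → A → Q → ℕ, (∑ t : Q, PP c' (a :: w) s t * vF N t)
        = ∑ t' : Q, c' s a t' * ∑ t : Q, PP c' w t' t * vF N t := by
      intro c'
      simp only [PP, Finset.mul_sum, Finset.sum_mul]
      rw [Finset.sum_comm]
      exact Finset.sum_congr rfl fun t _ => Finset.sum_congr rfl fun u _ => by ring
    rw [hstep (cc N), hstep (cU N)]
    refine Finset.sum_congr rfl fun t' _ => ?_
    by_cases hc : cc N s a t' = 0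
    · have hcu : cU N s a t' = 0 := by
        have := cU_le_cc N s a t'
        omega
      rw [hc, hcu]
      simp
    · by_cases hS : (∑ t : Q, PP (cc N) w t' t * vF N t) = 0
      · have hSU : (∑ t : Q, PP (cU N) w t' t * vF N t) = 0 := by
          have hle : (∑ t : Q, PP (cU N) w t' t * vF N t)
              ≤ ∑ t : Q, PP (cc N) w t' t * vF N t :=
            Finset.sum_le_sum fun t _ =>
              Nat.mul_le_mul_right _ (PP_mono (cU_le_cc N) w t' t)
          omega
        rw [hS, hSU]
        simp
      · have huse : Useful N t' := by
          constructor
          · obtain ⟨y, hy⟩ := hs.1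
            refine ⟨y ++ [a], ?_⟩
            have hterm : PP (cc N) y N.init s * PP (cc N) [a] s t'
                ≤ PP (cc N) (y ++ [a]) N.init t' := by
              rw [PP_append]
              exact Finset.single_le_sum (f := fun u => PP (cc N) y N.init u *
                PP (cc N) [a] u t') (fun u _ => Nat.zero_le _) (Finset.mem_univ s)
            have hsingle : PP (cc N) [a] s t' = cc N s a t' := PP_single _ _ _ _
            have hpos : 0 < PP (cc N) y N.init s * PP (cc N) [a] s t' :=
              Nat.mul_pos hy (by rw [hsingle]; exact Nat.pos_of_ne_zero hc)
            omega
          · exact ⟨w, Nat.pos_of_ne_zero hS⟩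
        have hcu : cU N s a t' = cc N s a t' := by
          have h1 : s ∈ UU N := Finset.mem_filter.mpr ⟨Finset.mem_univ s, hs⟩
          have h2 : t' ∈ UU N := Finset.mem_filter.mpr ⟨Finset.mem_univ t', huse⟩
          simp [cU, h1, h2]
        rw [hcu, ih t' huse]

theorem exists_bound (c : Q → A → Q → ℕ) : ∃ b, ∀ x a y, c x a y ≤ b :=
  ⟨Finset.univ.sup (fun xy : Q × A × Q => c xy.1 xy.2.1 xy.2.2),
    fun x a y => Finset.le_sup (f := fun xy : Q × A × Q => c xy.1 xy.2.1 xy.2.2)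
      (Finset.mem_univ (⟨x, a, y⟩ : Q × A × Q))⟩

def repW (x : List A) : ℕ → List A
  | 0 => []
  | m + 1 => x ++ repW x m

theorem repW_length (x : List A) : ∀ m, (repW x m).length = m * x.length := by
  intro m
  induction m with
  | zero => simp [repW]
  | succ m ih => simp [repW, ih, Nat.succ_mul]; omega

theorem PP_repW (c : Q → A → Q → ℕ) (x : List A) (s : Q) :
    ∀ m, (PP c x s s) ^ m ≤ PP c (repW x m) s s := by
  intro m
  induction m with
  | zero => simp [repW, PP]
  | succ m ih =>
    have hterm : PP c x s s * PP c (repW x m) s s ≤ PP c (x ++ repW x m) s s := by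
      rw [PP_append]
      exact Finset.single_le_sum (f := fun u => PP c x s u * PP c (repW x m) u s)
        (fun u _ => Nat.zero_le _) (Finset.mem_univ s)
    calc (PP c x s s) ^ (m + 1) = PP c x s s * (PP c x s s) ^ m := by
          rw [pow_succ]; ring
      _ ≤ PP c x s s * PP c (repW x m) s s := Nat.mul_le_mul_left _ ih
      _ ≤ PP c (repW x m.succ) s s := hterm

end S17
/-- An NFA with ε-transitions is either polynomially or exponentially
ambiguous: if there is no polynomial `h` with `da(N,w) ≤ h(|w|)` for all `w`, then
`g(n) = max{da(N,w) : |w| ≤ n}` is in `2^{Ω(n)}`.  (The alphabet and state set being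
finite, the set below is a nonempty bounded set of naturals, so `sSup` is its maximum.) -/
theorem statement17 {A Q : Type} [Fintype A] [Fintype Q] (N : ENFA A Q)
    (h : ¬ ∃ p : Polynomial ℕ, ∀ w : List A, da N w ≤ p.eval w.length) :
    ExpGrowth (fun n => sSup {m | ∃ w : List A, w.length ≤ n ∧ m = da N w}) := by
  classical
  by_cases hda0 : ∀ w : List A, da N w = 0
  · exact absurd ⟨0, fun w => by rw [hda0 w]; simp⟩ h
  · push_neg at hda0
    obtain ⟨w₀, hw₀⟩ := hda0
    have husein : S17.Useful N N.init := by
      constructor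
      · exact ⟨[], by simp [S17.PP]⟩
      · refine ⟨w₀, ?_⟩
        have hda := S17.da_eq_PP N w₀
        have hpos : 0 < da N w₀ := Nat.pos_of_ne_zero hw₀
        omega
    obtain ⟨b, hble⟩ := S17.exists_bound (S17.cc N)
    have hbU : ∀ x a y, S17.cU N x a y ≤ b :=
      fun x a y => le_trans (S17.cU_le_cc N x a y) (hble x a y)
    set k := Fintype.card Q with hk
    by_cases hEDA : ∃ (s : Q) (x : List A), 2 ≤ S17.PP (S17.cU N) x s s
    · -- EDA: exponential growth by pumping
      obtain ⟨s, x, hx2⟩ := hEDA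
      have hx2' : 2 ≤ S17.PP (S17.cc N) x s s :=
        le_trans hx2 (S17.PP_mono (S17.cU_le_cc N) x s s)
      have hxne : x ≠ [] := by
        intro hxe
        subst hxe
        have h1 : S17.PP (S17.cU N) ([] : List A) s s ≤ 1 := by simp [S17.PP]
        omega
      have hsU : S17.Useful N s := by
        by_contra hns
        have hs0 : S17.PP (S17.cU N) x s s = 0 := by
          cases x with
          | nil => exact absurd rfl hxne
          | cons a x' =>
            have hz : ∀ t, S17.cU N s a t = 0 := by
              intro t
              unfold S17.cU
              rw [if_neg]
              intro hmem
              exact hns (Finset.mem_filter.mp hmem.1).2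
            simp [S17.PP, hz]
        omega
      obtain ⟨y, hy⟩ := hsU.1
      obtain ⟨z, hz⟩ := hsU.2
      have hpump : ∀ m : ℕ, 2 ^ m ≤ da N (y ++ (S17.repW x m ++ z)) := by
        intro m
        rw [S17.da_eq_PP]
        have h1 : ∀ t : Q, S17.PP (S17.cc N) y N.init s *
            (S17.PP (S17.cc N) (S17.repW x m) s s * S17.PP (S17.cc N) z s t)
            ≤ S17.PP (S17.cc N) (y ++ (S17.repW x m ++ z)) N.init t := by
          intro t
          have hin : S17.PP (S17.cc N) (S17.repW x m) s s * S17.PP (S17.cc N) z s t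
              ≤ S17.PP (S17.cc N) (S17.repW x m ++ z) s t := by
            rw [S17.PP_append (S17.cc N) (S17.repW x m) z s t]
            exact Finset.single_le_sum
              (f := fun u => S17.PP (S17.cc N) (S17.repW x m) s u * S17.PP (S17.cc N) z u t)
              (fun u _ => Nat.zero_le _) (Finset.mem_univ s)
          have hout : S17.PP (S17.cc N) y N.init s *
              S17.PP (S17.cc N) (S17.repW x m ++ z) s t
              ≤ S17.PP (S17.cc N) (y ++ (S17.repW x m ++ z)) N.init t := by
            rw [S17.PP_append (S17.cc N) y (S17.repW x m ++ z) N.init t]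
            exact Finset.single_le_sum
              (f := fun u => S17.PP (S17.cc N) y N.init u *
                S17.PP (S17.cc N) (S17.repW x m ++ z) u t)
              (fun u _ => Nat.zero_le _) (Finset.mem_univ s)
          exact le_trans (Nat.mul_le_mul_left _ hin) hout
        have hsum : S17.PP (S17.cc N) y N.init s * (S17.PP (S17.cc N) (S17.repW x m) s s *
              (∑ t : Q, S17.PP (S17.cc N) z s t * S17.vF N t))
            ≤ ∑ t : Q, S17.PP (S17.cc N) (y ++ (S17.repW x m ++ z)) N.init t * S17.vF N t := by
          have he : S17.PP (S17.cc N) y N.init s * (S17.PP (S17.cc N) (S17.repW x m) s s *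
                (∑ t : Q, S17.PP (S17.cc N) z s t * S17.vF N t))
              = ∑ t : Q, (S17.PP (S17.cc N) y N.init s * (S17.PP (S17.cc N) (S17.repW x m) s s *
                  S17.PP (S17.cc N) z s t)) * S17.vF N t := by
            simp only [Finset.mul_sum]
            exact Finset.sum_congr rfl fun t _ => by ring
          rw [he]
          exact Finset.sum_le_sum fun t _ => Nat.mul_le_mul_right _ (h1 t)
        have h2m : 2 ^ m ≤ S17.PP (S17.cc N) (S17.repW x m) s s :=
          le_trans (Nat.pow_le_pow_left hx2' m) (S17.PP_repW _ x s m)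
        calc (2 : ℕ) ^ m = 1 * (2 ^ m * 1) := by ring
          _ ≤ S17.PP (S17.cc N) y N.init s * (S17.PP (S17.cc N) (S17.repW x m) s s *
              (∑ t : Q, S17.PP (S17.cc N) z s t * S17.vF N t)) :=
            Nat.mul_le_mul hy (Nat.mul_le_mul h2m hz)
          _ ≤ _ := hsum
      have hbdd : ∀ n : ℕ, BddAbove {m | ∃ w : List A, w.length ≤ n ∧ m = da N w} := by
        intro n
        have himg : {m | ∃ w : List A, w.length ≤ n ∧ m = da N w}
            = (fun w : List A => da N w) '' {w | w.length ≤ n} := by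
          ext mm
          simp only [Set.mem_setOf_eq, Set.mem_image]
          constructor
          · rintro ⟨w, h1, h2⟩; exact ⟨w, h1, h2.symm⟩
          · rintro ⟨w, h1, h2⟩; exact ⟨w, h1, h2.symm⟩
        rw [himg]
        exact ((List.finite_length_le A n).image _).bddAbove
      have hle_g : ∀ (n : ℕ) (w : List A), w.length ≤ n →
          da N w ≤ sSup {m | ∃ w : List A, w.length ≤ n ∧ m = da N w} := by
        intro n w hw
        exact le_csSup (hbdd n) ⟨w, hw, rfl⟩
      set L := x.length with hL
      have hL1 : 1 ≤ L := by
        cases x with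
        | nil => exact absurd rfl hxne
        | cons _ _ => simp [hL]
      set yz := y.length + z.length with hyz
      refine ⟨(2 : ℝ) ^ ((1 : ℝ) / (2 * L)), ?_, 2 * yz + 2 * L, ?_⟩
      · rw [Real.one_lt_rpow_iff_of_pos (by norm_num)]
        left
        refine ⟨by norm_num, ?_⟩
        have hLpos : (0 : ℝ) < L := by exact_mod_cast hL1
        positivity
      · intro n hn
        set m := (n - yz) / L with hm
        have hkey1 : L * m + (n - yz) % L = n - yz := Nat.div_add_mod _ _
        have hmod : (n - yz) % L < L := Nat.mod_lt _ (by omega)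
        set r := (n - yz) % L with hr
        set Lm := L * m with hLm
        have hlen : (y ++ (S17.repW x m ++ z)).length ≤ n := by
          simp only [List.length_append, S17.repW_length]
          rw [Nat.mul_comm m L, ← hLm]
          omega
        have h2lm : n ≤ m * (2 * L) := by
          have h1 : n ≤ 2 * Lm := by omega
          rw [hLm] at h1
          have h2 : 2 * (L * m) = m * (2 * L) := by ring
          rw [h2] at h1
          exact h1
        have hpow : ((2 : ℝ) ^ ((1 : ℝ) / (2 * L))) ^ n ≤ (2 : ℝ) ^ (m : ℝ) := by
          rw [← Real.rpow_natCast ((2 : ℝ) ^ ((1 : ℝ) / (2 * (L : ℝ)))) n,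
            ← Real.rpow_mul (by norm_num : (0 : ℝ) ≤ 2)]
          apply Real.rpow_le_rpow_of_exponent_le (by norm_num)
          have hLpos : (0 : ℝ) < 2 * (L : ℝ) := by
            have : (0 : ℝ) < L := by exact_mod_cast hL1
            linarith
          rw [div_mul_eq_mul_div, one_mul, div_le_iff₀ hLpos]
          exact_mod_cast h2lm
        have hfin : ((2 : ℝ) ^ (m : ℝ)) = ((2 ^ m : ℕ) : ℝ) := by
          rw [Real.rpow_natCast]
          push_cast
          ring
        calc ((2 : ℝ) ^ ((1 : ℝ) / (2 * (L : ℝ)))) ^ n ≤ (2 : ℝ) ^ (m : ℝ) := hpow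
          _ = ((2 ^ m : ℕ) : ℝ) := hfin
          _ ≤ _ := by
            have hda := le_trans (hpump m) (hle_g n _ hlen)
            exact_mod_cast hda
    · -- no EDA: polynomial bound, contradicting `h`
      exfalso
      apply h
      have hloop : ∀ (s : Q) (yy : List A), S17.PP (S17.cU N) yy s s ≤ 1 := by
        intro s yy
        by_contra hgt
        exact hEDA ⟨s, yy, by omega⟩
      have hsupp : ∀ x a y, S17.cU N x a y ≠ 0 → x ∈ S17.UU N ∧ y ∈ S17.UU N := by
        intro x a y h0
        by_contra hc
        exact h0 (if_neg hc)
      refine ⟨S17.pF b k k * Polynomial.C (∑ t : Q, S17.vF N t), fun w => ?_⟩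
      have hmain := S17.mainBound (b := b) k (S17.cU N) (S17.UU N) hbU hloop hsupp
        (by rw [hk]; exact Finset.card_le_univ _) w.length w
      calc da N w = ∑ t : Q, S17.PP (S17.cc N) w N.init t * S17.vF N t := S17.da_eq_PP N w
        _ = ∑ t : Q, S17.PP (S17.cU N) w N.init t * S17.vF N t :=
          S17.useful_restrict N w N.init husein
        _ ≤ ∑ t : Q, S17.FF b k k w.length * S17.vF N t :=
          Finset.sum_le_sum fun t _ =>
            Nat.mul_le_mul_right _ (by rw [hk]; exact hmain N.init t le_rfl)
        _ = S17.FF b k k w.length * ∑ t : Q, S17.vF N t := by rw [Finset.mul_sum]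
        _ = (S17.pF b k k * Polynomial.C (∑ t : Q, S17.vF N t)).eval w.length := by
          rw [Polynomial.eval_mul, Polynomial.eval_C, S17.FF]
end
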